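/- The rotation map Rot satisfies: for any ptableau T ∈ PTab_{(ℓ,n)}, *Rot(T) = Rot(T*) and Rot(*T) = Rot(T)*; Rot is an involution (on ptableaux and on words); and Pf(Rot(ω)) = Rot(Pf(ω)) for every word ω ∈ [n]^{⊗k} (with its parsing reversed accordingly). -/

import Mathlib

namespace PerfTab

/-- A rectangular tableau: `entry r j` is the content of the box in row `r`
(row `0` is the top row) and column `j` (column `0` is leftmost); `none` is a blank. -/
structure Tab where
  entry : ℕ → ℕ → Option ℕ
  rows : ℕ
  cols : ℕ

/-- The perforated-tableau conditions. -/
structure IsPTab (T : Tab) : Prop where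
  pos : ∀ r j v, T.entry r j = some v → 0 < v
  row_bound : ∀ r j, T.rows ≤ r → T.entry r j = none
  col_bound : ∀ r j, T.cols ≤ j → T.entry r j = none
  no_blank_col : ∀ j < T.cols, ∃ r, (T.entry r j).isSome
  strip : ∀ v r r' j j', T.entry r j = some v → T.entry r' j' = some v → r < r' → j' < j
  shadow : ∀ v w r₁ j₁ r₂ j₂, T.entry r₁ j₁ = some v → T.entry r₂ j₂ = some w →
    v < w → r₁ < r₂ ∨ j₁ < j₂

/-- One swap of a blank with a horizontally adjacent non-blank entry, both sides
being valid ptableaux with the same dimensions. -/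
def SwapStep (T T' : Tab) : Prop :=
  IsPTab T ∧ IsPTab T' ∧ T.rows = T'.rows ∧ T.cols = T'.cols ∧
  ∃ r j,
    ((T.entry r j = none ∧ (T.entry r (j + 1)).isSome) ∨
      ((T.entry r j).isSome ∧ T.entry r (j + 1) = none)) ∧
    T'.entry r j = T.entry r (j + 1) ∧ T'.entry r (j + 1) = T.entry r j ∧
    ∀ r' j', ¬(r' = r ∧ (j' = j ∨ j' = j + 1)) → T'.entry r' j' = T.entry r' j'

/-- Row equivalence of perforated tableaux. -/
def RowEquiv (T T' : Tab) : Prop :=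
  IsPTab T ∧ IsPTab T' ∧ Relation.ReflTransGen SwapStep T T'

/-- The (increasing) list of columns of the non-blank boxes in row `r`. -/
def filledCols (T : Tab) (r : ℕ) : List ℕ :=
  (List.range T.cols).filter fun j => (T.entry r j).isSome

/-- The list of values in row `r`, read left to right. -/
def rowVals (T : Tab) (r : ℕ) : List ℕ :=
  (List.range T.cols).filterMap fun j => T.entry r j

def blanksInRow (T : Tab) (r : ℕ) : ℕ :=
  ((List.range T.cols).filter fun j => (T.entry r j).isNone).length

/-- Number of filled boxes in row `r` (the `r`-th component of the weight). -/
def rowFill (T : Tab) (r : ℕ) : ℕ := (filledCols T r).length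

def rowCount (T : Tab) (v r : ℕ) : ℕ :=
  ((List.range T.cols).filter fun j => decide (T.entry r j = some v)).length

/-- Number of boxes with value `v` in rows `a` through `b` (inclusive, 0-indexed). -/
def countValRows (T : Tab) (v a b : ℕ) : ℕ :=
  ((List.range (b + 1 - a)).map fun t => rowCount T v (a + t)).sum

def totalCount (T : Tab) (v : ℕ) : ℕ :=
  ((List.range T.rows).map fun r => rowCount T v r).sum

/-- `T` is left-justified: each entry of `T` is weakly to the left of the
corresponding entry in every row-equivalent ptableau. -/
def LeftJustified (T : Tab) : Prop :=
  ∀ T', RowEquiv T T' → ∀ r, List.Forall₂ (· ≤ ·) (filledCols T r) (filledCols T' r)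

def RightJustified (T : Tab) : Prop :=
  ∀ T', RowEquiv T T' → ∀ r, List.Forall₂ (fun a b => b ≤ a) (filledCols T r) (filledCols T' r)

/-! ### Words and parsings -/

/-- A word in `[n]^{⊗ k}` for some `k ≥ 1`. -/
def IsWord (n : ℕ) (w : List ℕ) : Prop := w ≠ [] ∧ ∀ a ∈ w, 1 ≤ a ∧ a ≤ n

def flatP : List (List ℕ) → List ℕ
  | [] => []
  | h :: t => h ++ flatP t

/-- A parsed word over `[n]`: a list of weakly decreasing factors with letters in `[n]`. -/
def IsParsedWord (n : ℕ) (P : List (List ℕ)) : Prop :=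
  (∀ h ∈ P, List.Chain' (fun a b => b ≤ a) h) ∧ ∀ h ∈ P, ∀ a ∈ h, 1 ≤ a ∧ a ≤ n

/-- The minimal parsing of a word into maximal weakly decreasing factors. -/
def minParse : List ℕ → List (List ℕ)
  | [] => []
  | a :: t =>
    match t, minParse t with
    | b :: _, h :: rest => if b ≤ a then (a :: h) :: rest else [a] :: h :: rest
    | _, _ => [[a]]

/-! ### The map `Pf` from parsed words to perforated tableaux -/

/-- Column at which the next box in row `row` is placed: one more than the largest
column used so far in rows weakly below `row`. -/
def pfCol (placed : List (ℕ × ℕ × ℕ)) (row : ℕ) : ℕ :=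
  (placed.filterMap fun b => if row ≤ b.1 then some (b.2.1 + 1) else none).foldr max 0

/-- Greedy placement of indexed letters: a letter `a` of the `s`-th factor becomes a
box with value `s` in row `a - 1`.  Boxes are triples `(row, col, value)`. -/
def pfBoxes : List (ℕ × ℕ) → List (ℕ × ℕ × ℕ) → List (ℕ × ℕ × ℕ)
  | [], placed => placed
  | sa :: rest, placed =>
    pfBoxes rest (placed ++ [(sa.2 - 1, pfCol placed (sa.2 - 1), sa.1)])

def indexedLetters : List (List ℕ) → ℕ → List (ℕ × ℕ)
  | [], _ => []
  | h :: t, s => (h.map fun a => (s, a)) ++ indexedLetters t (s + 1)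

/-- The perforated tableau (in left-justified form) associated to a parsed word. -/
def Pf (P : List (List ℕ)) (n : ℕ) : Tab :=
  let boxes := pfBoxes (indexedLetters P 1) []
  { entry := fun r j =>
      boxes.findSome? fun b => if b.1 = r ∧ b.2.1 = j then some b.2.2 else none
    rows := n
    cols := (boxes.map fun b => b.2.1 + 1).foldr max 0 }

def splitLens : List ℕ → List ℕ → List (List ℕ)
  | [], _ => []
  | l :: ls, w => w.take l :: splitLens ls (w.drop l)

/-- Re-parse the word `w` using the factor lengths of the parsing `P`. -/
def reparse (P : List (List ℕ)) (w : List ℕ) : List (List ℕ) :=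
  splitLens (P.map List.length) w

/-- A minimally parsed ptableau: the head of the `(v+1)`-strip lies strictly below
the tail of the `v`-strip. -/
def MinimallyParsed (T : Tab) : Prop :=
  ∀ v, 1 ≤ v → (∃ r j, T.entry r j = some (v + 1)) →
    ∃ r j r' j', T.entry r j = some (v + 1) ∧ T.entry r' j' = some v ∧ r' < r

/-! ### Kashiwara crystal operators on words -/

def ce (i : ℕ) (w : List ℕ) (j : ℕ) : ℤ :=
  ((w.take j).count (i + 1) : ℤ) - ((w.take (j - 1)).count i : ℤ)

def cf (i : ℕ) (w : List ℕ) (j : ℕ) : ℤ :=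
  ((w.drop (j - 1)).count i : ℤ) - ((w.drop j).count (i + 1) : ℤ)

def maxOver (k : ℕ) (g : ℕ → ℤ) : ℤ := ((List.range k).map g).foldr max (g 0)

/-- The raising operator `e_i` on words (Kashiwara convention). -/
def wordE (i : ℕ) (w : List ℕ) : Option (List ℕ) :=
  if w.length = 0 then none
  else
    let M := maxOver w.length fun j0 => ce i w (j0 + 1)
    match (List.range w.length).find? fun j0 => decide (ce i w (j0 + 1) = M) with
    | some j0 => if w.getD j0 0 = i + 1 then some (w.set j0 i) else none
    | none => none

/-- The lowering operator `f_i` on words (Kashiwara convention). -/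
def wordF (i : ℕ) (w : List ℕ) : Option (List ℕ) :=
  if w.length = 0 then none
  else
    let M := maxOver w.length fun j0 => cf i w (j0 + 1)
    if M ≤ 0 then none
    else
      match (List.range w.length).reverse.find? fun j0 => decide (cf i w (j0 + 1) = M) with
      | some j0 => if w.getD j0 0 = i then some (w.set j0 (i + 1)) else none
      | none => none

/-! ### Crystal operators on perforated tableaux -/

/-- `T[i,i+1]`: the two-row tableau formed by rows `i` and `i+1` of `T`,
with all-blank columns deleted. -/
def rowPair (T : Tab) (i : ℕ) : Tab :=
  let keep := (List.range T.cols).filter fun j =>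
    (T.entry i j).isSome || (T.entry (i + 1) j).isSome
  { entry := fun r j =>
      if r < 2 ∧ j < keep.length then T.entry (i + r) (keep.getD j 0) else none
    rows := 2
    cols := keep.length }

/-- `T'` is obtained from `T` by the ptableau raising operator for the row pair
`(i, i+1)` (`0`-indexed), the swap occurring in column `c'` of the left-justified
representative: in `*T[i,i+1]` the rightmost bottom-row entry with a blank directly
above it is the `k`-th filled box of the bottom row; the corresponding `k`-th filled
box of row `i+1` of `*T`, in column `c'`, is swapped with the blank above it. -/
def PtabEAt (i c' : ℕ) (T T' : Tab) : Prop :=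
  ∃ (L L₂ : Tab) (k c : ℕ),
    RowEquiv T L ∧ LeftJustified L ∧
    RowEquiv (rowPair T i) L₂ ∧ LeftJustified L₂ ∧
    (filledCols L₂ 1)[k]? = some c ∧ L₂.entry 0 c = none ∧
    (∀ c₂, (L₂.entry 1 c₂).isSome → L₂.entry 0 c₂ = none → c₂ ≤ c) ∧
    (filledCols L (i + 1))[k]? = some c' ∧ L.entry i c' = none ∧
    T'.rows = L.rows ∧ T'.cols = L.cols ∧
    T'.entry i c' = L.entry (i + 1) c' ∧ T'.entry (i + 1) c' = none ∧
    ∀ r j, ¬(j = c' ∧ (r = i ∨ r = i + 1)) → T'.entry r j = L.entry r j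

def PtabE (i : ℕ) (T T' : Tab) : Prop := ∃ c', PtabEAt i c' T T'

/-- `e_i(T) = NULL`: no bottom-row entry of `*T[i,i+1]` has a blank above it. -/
def PtabENull (i : ℕ) (T : Tab) : Prop :=
  ∀ L₂, RowEquiv (rowPair T i) L₂ → LeftJustified L₂ →
    ∀ c, (L₂.entry 1 c).isSome → (L₂.entry 0 c).isSome

/-- `T'` is obtained from `T` by the ptableau lowering operator for the row pair
`(i, i+1)` (`0`-indexed), the swap occurring in column `c'` of the right-justified
representative. -/
def PtabFAt (i c' : ℕ) (T T' : Tab) : Prop :=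
  ∃ (R R₂ : Tab) (k c : ℕ),
    RowEquiv T R ∧ RightJustified R ∧
    RowEquiv (rowPair T i) R₂ ∧ RightJustified R₂ ∧
    (filledCols R₂ 0)[k]? = some c ∧ R₂.entry 1 c = none ∧
    (∀ c₂, (R₂.entry 0 c₂).isSome → R₂.entry 1 c₂ = none → c ≤ c₂) ∧
    (filledCols R i)[k]? = some c' ∧ R.entry (i + 1) c' = none ∧
    T'.rows = R.rows ∧ T'.cols = R.cols ∧
    T'.entry (i + 1) c' = R.entry i c' ∧ T'.entry i c' = none ∧
    ∀ r j, ¬(j = c' ∧ (r = i ∨ r = i + 1)) → T'.entry r j = R.entry r j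

def PtabF (i : ℕ) (T T' : Tab) : Prop := ∃ c', PtabFAt i c' T T'

def PtabFNull (i : ℕ) (T : Tab) : Prop :=
  ∀ R₂, RowEquiv (rowPair T i) R₂ → RightJustified R₂ →
    ∀ c, (R₂.entry 0 c).isSome → (R₂.entry 1 c).isSome

/-- Highest weight: all raising operators are `NULL`. -/
def HighestWeight (T : Tab) : Prop := ∀ i, i + 1 < T.rows → PtabENull i T

/-- Lowest weight: all lowering operators are `NULL`. -/
def LowestWeight (T : Tab) : Prop := ∀ i, i + 1 < T.rows → PtabFNull i T

/-! ### Rotation -/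

def rotTab (l : ℕ) (T : Tab) : Tab :=
  { entry := fun r j =>
      if r < T.rows ∧ j < T.cols then
        (T.entry (T.rows - 1 - r) (T.cols - 1 - j)).map fun v => l + 1 - v
      else none
    rows := T.rows
    cols := T.cols }

def rotWord (n : ℕ) (w : List ℕ) : List ℕ := (w.map fun a => n + 1 - a).reverse

def rotParse (n : ℕ) (P : List (List ℕ)) : List (List ℕ) :=
  (P.map fun h => rotWord n h).reverse

/-! ### Shapes -/

/-- Partition-shaped: no blank of the left-justified representative has content
to its right or below it. -/
def PartitionShaped (T : Tab) : Prop :=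
  ∀ L, RowEquiv T L → LeftJustified L →
    ∀ r j, r < L.rows → j < L.cols → L.entry r j = none →
      (∀ j', j ≤ j' → L.entry r j' = none) ∧ ∀ r', r ≤ r' → L.entry r' j = none

/-- Anti-partition-shaped: no blank of the right-justified representative has content
to its left or above it. -/
def AntiPartitionShaped (T : Tab) : Prop :=
  ∀ R, RowEquiv T R → RightJustified R →
    ∀ r j, r < R.rows → j < R.cols → R.entry r j = none →
      (∀ j' ≤ j, R.entry r j' = none) ∧ ∀ r' ≤ r, R.entry r' j = none

def IsPartitionList (lam : List ℕ) : Prop := List.Chain' (fun a b => b ≤ a) lam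

/-- `T` is partition-shaped of shape `lam`. -/
def ShapeOf (T : Tab) (lam : List ℕ) : Prop :=
  PartitionShaped T ∧ ∀ r, rowFill T r = lam.getD r 0

/-! ### Tensor products -/

/-- `W = T ⊗ U` (with the entries of `U` shifted up by `l`): `W` is a left-justified
ptableau with the same rows as `T` whose row contents are those of `T` followed by
those of `U` shifted by `l`. -/
def IsTensor (l : ℕ) (T U W : Tab) : Prop :=
  IsPTab W ∧ LeftJustified W ∧ W.rows = T.rows ∧
  ∀ r, rowVals W r = rowVals T r ++ (rowVals U r).map (· + l)

/-! ### Crystal graphs -/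

def TabRel (T T' : Tab) : Prop :=
  RowEquiv T T' ∨ ∃ i, i + 1 < T.rows ∧ (PtabE i T T' ∨ PtabF i T T')

/-- Membership in the connected crystal generated by `T₀`. -/
def InCrystal (T₀ T : Tab) : Prop :=
  Relation.ReflTransGen (fun a b => TabRel a b ∨ TabRel b a) T₀ T

def WordRel (n : ℕ) (w w' : List ℕ) : Prop :=
  ∃ i, 1 ≤ i ∧ i < n ∧ (wordE i w = some w' ∨ wordF i w = some w')

def InWordCrystal (n : ℕ) (w₀ w : List ℕ) : Prop :=
  Relation.ReflTransGen (fun a b => WordRel n a b ∨ WordRel n b a) w₀ w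

/-! ### Semistandard Young tableaux and the word condition -/

/-- A semistandard Young tableau presented as its list of rows. -/
def IsSSYTrows (P : List (List ℕ)) : Prop :=
  (∀ row ∈ P, row ≠ []) ∧
  (∀ row ∈ P, ∀ a ∈ row, 1 ≤ a) ∧
  (∀ row ∈ P, List.Chain' (· ≤ ·) row) ∧
  List.Chain' (fun r₁ r₂ => r₂.length ≤ r₁.length) P ∧
  ∀ i, i + 1 < P.length → ∀ j, j < (P.getD (i + 1) []).length →
    (P.getD i []).getD j 0 < (P.getD (i + 1) []).getD j 0

/-- The word condition on ptableaux: `T = Pf(ω)` for `ω` the row-reading word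
(rows right-to-left, top to bottom) of a semistandard Young tableau; the reading
word parsed by rows is its minimal parsing. -/
def WordCond (n : ℕ) (T : Tab) : Prop :=
  ∃ P, IsSSYTrows P ∧ (∀ row ∈ P, ∀ a ∈ row, a ≤ n) ∧
    RowEquiv T (Pf (P.map List.reverse) n)

/-- The highest weight ptableau `T_ν`: row `r` consists of `ν_r` copies of `r + 1`. -/
def Tnu (n : ℕ) (nu : List ℕ) : Tab :=
  { entry := fun r j => if r < n ∧ j < nu.getD r 0 then some (r + 1) else none
    rows := n
    cols := nu.foldr max 0 }

/-! ### Skew shapes and jeu de taquin -/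

def NWblank (S : Tab) (r j : ℕ) : Prop := ∀ r' ≤ r, ∀ j' ≤ j, S.entry r' j' = none

def SEblank (S : Tab) (r j : ℕ) : Prop := ∀ r', r ≤ r' → ∀ j', j ≤ j' → S.entry r' j' = none

/-- A skew-shaped form: every blank belongs either to a partition-shaped collection
in the upper left corner or to an anti-partition-shaped collection in the lower
right corner. -/
def SkewForm (S : Tab) : Prop :=
  ∀ r < S.rows, ∀ j < S.cols, S.entry r j = none → NWblank S r j ∨ SEblank S r j

def SkewShaped (T : Tab) : Prop := ∃ S, RowEquiv T S ∧ SkewForm S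

/-- An inner corner: a blank with content directly to its right and directly below it. -/
def InnerCorner (S : Tab) (p : ℕ × ℕ) : Prop :=
  S.entry p.1 p.2 = none ∧ (S.entry p.1 (p.2 + 1)).isSome ∧ (S.entry (p.1 + 1) p.2).isSome

/-- An outer corner: a blank with content directly to its left and directly above it,
and only blanks weakly below-right of it. -/
def OuterCorner (S : Tab) (p : ℕ × ℕ) : Prop :=
  S.entry p.1 p.2 = none ∧ 1 ≤ p.1 ∧ 1 ≤ p.2 ∧
  (S.entry (p.1 - 1) p.2).isSome ∧ (S.entry p.1 (p.2 - 1)).isSome ∧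
  SEblank S p.1 p.2

def RowsWeak (S : Tab) : Prop :=
  ∀ r j j', j ≤ j' → ∀ v v', S.entry r j = some v → S.entry r j' = some v' → v ≤ v'

def ColsStrict (S : Tab) : Prop :=
  ∀ r r' j, r < r' → ∀ v v', S.entry r j = some v → S.entry r' j = some v' → v < v'

/-- Swap the blank at `p` with the content at `q`, leaving everything else unchanged. -/
def blankSwap (S : Tab) (p q : ℕ × ℕ) (S' : Tab) : Prop :=
  S'.rows = S.rows ∧ S'.cols = S.cols ∧
  S.entry p.1 p.2 = none ∧ (S.entry q.1 q.2).isSome ∧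
  S'.entry p.1 p.2 = S.entry q.1 q.2 ∧ S'.entry q.1 q.2 = none ∧
  ∀ x : ℕ × ℕ, x ≠ p → x ≠ q → S'.entry x.1 x.2 = S.entry x.1 x.2

/-- One outward jeu de taquin slide: the blank at `p` swaps with the entry to its
right or the entry below it, the unique choice keeping rows weakly increasing and
columns strictly increasing on non-blank entries. -/
def OutStep (S : Tab) (p : ℕ × ℕ) (S' : Tab) (q : ℕ × ℕ) : Prop :=
  (q = (p.1, p.2 + 1) ∨ q = (p.1 + 1, p.2)) ∧ blankSwap S p q S' ∧
  RowsWeak S' ∧ ColsStrict S'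

/-- One inward jeu de taquin slide: the blank at `p` swaps with the entry above it
if that entry is `≥` the entry to its left (or if there is no entry to the left),
and with the entry to its left otherwise. -/
def InStep (S : Tab) (p : ℕ × ℕ) (S' : Tab) (q : ℕ × ℕ) : Prop :=
  blankSwap S p q S' ∧
  ((q = (p.1 - 1, p.2) ∧ 1 ≤ p.1 ∧ (S.entry (p.1 - 1) p.2).isSome ∧
      ∀ b c, S.entry (p.1 - 1) p.2 = some b → S.entry p.1 (p.2 - 1) = some c → c ≤ b) ∨
    (q = (p.1, p.2 - 1) ∧ 1 ≤ p.2 ∧ (S.entry p.1 (p.2 - 1)).isSome ∧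
      (p.1 = 0 ∨ S.entry (p.1 - 1) p.2 = none ∨
        ∃ b c, S.entry (p.1 - 1) p.2 = some b ∧ S.entry p.1 (p.2 - 1) = some c ∧ b < c)))

/-- Outward jeu de taquin of a blank, recording the path of positions it occupies. -/
inductive OutJdtPath : Tab → List (ℕ × ℕ) → Tab → Prop
  | done (S : Tab) (p : ℕ × ℕ) :
      S.entry p.1 (p.2 + 1) = none → S.entry (p.1 + 1) p.2 = none →
      OutJdtPath S [p] S
  | step (S S₁ S' : Tab) (p q : ℕ × ℕ) (rest : List (ℕ × ℕ)) :
      OutStep S p S₁ q → OutJdtPath S₁ (q :: rest) S' →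
      OutJdtPath S (p :: q :: rest) S'

/-- Inward jeu de taquin of a blank, recording the path of positions it occupies. -/
inductive InJdtPath : Tab → List (ℕ × ℕ) → Tab → Prop
  | done (S : Tab) (p : ℕ × ℕ) :
      (p.1 = 0 ∨ S.entry (p.1 - 1) p.2 = none) →
      (p.2 = 0 ∨ S.entry p.1 (p.2 - 1) = none) →
      InJdtPath S [p] S
  | step (S S₁ S' : Tab) (p q : ℕ × ℕ) (rest : List (ℕ × ℕ)) :
      InStep S p S₁ q → InJdtPath S₁ (q :: rest) S' →
      InJdtPath S (p :: q :: rest) S'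

/-- One evacuation stage: complete inward jeu de taquin from an outer corner. -/
def EvacStep (S S' : Tab) : Prop :=
  ∃ p path, OuterCorner S p ∧ InJdtPath S (p :: path) S'

/-- `S'` is the result of the Schützenberger evacuation procedure applied to `S`. -/
def IsEvac (S S' : Tab) : Prop :=
  Relation.ReflTransGen EvacStep S S' ∧ ∀ p, ¬ OuterCorner S' p

/-! ### Two-colored configurations and the Push algorithms -/

/-- A two-colored configuration: `false` marks μ-content, `true` marks ν-content. -/
def SwitchConfig : Type := ℕ → ℕ → Option (Bool × ℕ)

def toConfig (l : ℕ) (W : Tab) : SwitchConfig := fun r j =>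
  (W.entry r j).map fun v => if v ≤ l then (false, v) else (true, v - l)

/-- Recover a tableau from a configuration, the ν-content keeping its values and the
μ-content shifted up by `m` (so the result reads as `T_ν ⊗ T'`). -/
def configToTab (m rows cols : ℕ) (C : SwitchConfig) : Tab :=
  { entry := fun r j => (C r j).map fun b => if b.1 then b.2 else b.2 + m
    rows := rows
    cols := cols }

def colorPart (b : Bool) (C : SwitchConfig) : ℕ → ℕ → Option ℕ := fun r j =>
  match C r j with
  | some bv => if bv.1 = b then some bv.2 else none
  | none => none

/-- BSS-perforated: ignoring blanks, rows weakly increase and columns strictly increase. -/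
def BSSPerf (f : ℕ → ℕ → Option ℕ) : Prop :=
  (∀ r j j', j ≤ j' → ∀ v v', f r j = some v → f r j' = some v' → v ≤ v') ∧
  ∀ r r' j, r < r' → ∀ v v', f r j = some v → f r' j = some v' → v < v'

/-- A BSS perforated pair: both color classes are BSS-perforated. -/
def BSSPair (C : SwitchConfig) : Prop :=
  BSSPerf (colorPart false C) ∧ BSSPerf (colorPart true C)

/-- Switch a μ-box at `p` with a ν-box immediately to its right or below it,
both configurations forming BSS perforated pairs. -/
def SwitchAt (C : SwitchConfig) (p q : ℕ × ℕ) (C' : SwitchConfig) : Prop :=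
  (q = (p.1, p.2 + 1) ∨ q = (p.1 + 1, p.2)) ∧
  (∃ v, C p.1 p.2 = some (false, v)) ∧ (∃ w, C q.1 q.2 = some (true, w)) ∧
  C' p.1 p.2 = C q.1 q.2 ∧ C' q.1 q.2 = C p.1 p.2 ∧
  (∀ x : ℕ × ℕ, x ≠ p → x ≠ q → C' x.1 x.2 = C x.1 x.2) ∧
  BSSPair C ∧ BSSPair C'

/-- Switch a ν-box at `p` with a μ-box immediately to its left or above it. -/
def SwitchAtIn (C : SwitchConfig) (p q : ℕ × ℕ) (C' : SwitchConfig) : Prop :=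
  ((q = (p.1, p.2 - 1) ∧ 1 ≤ p.2) ∨ (q = (p.1 - 1, p.2) ∧ 1 ≤ p.1)) ∧
  (∃ w, C p.1 p.2 = some (true, w)) ∧ (∃ v, C q.1 q.2 = some (false, v)) ∧
  C' p.1 p.2 = C q.1 q.2 ∧ C' q.1 q.2 = C p.1 p.2 ∧
  (∀ x : ℕ × ℕ, x ≠ p → x ≠ q → C' x.1 x.2 = C x.1 x.2) ∧
  BSSPair C ∧ BSSPair C'

/-- The μ-box at `p` has a ν-box immediately to its right or below it. -/
def NuAdj (C : SwitchConfig) (p : ℕ × ℕ) : Prop :=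
  ∃ q : ℕ × ℕ, (q = (p.1, p.2 + 1) ∨ q = (p.1 + 1, p.2)) ∧ ∃ w, C q.1 q.2 = some (true, w)

/-- The ν-box at `p` has a μ-box immediately to its left or above it. -/
def MuAdj (C : SwitchConfig) (p : ℕ × ℕ) : Prop :=
  ∃ q : ℕ × ℕ, ((q = (p.1, p.2 - 1) ∧ 1 ≤ p.2) ∨ (q = (p.1 - 1, p.2) ∧ 1 ≤ p.1)) ∧
    ∃ v, C q.1 q.2 = some (false, v)

/-- Push Down order: choose a μ-box of the largest value having ν-content adjacent
below or to the right; among those, the rightmost one. -/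
def MuChoice (C : SwitchConfig) (p : ℕ × ℕ) : Prop :=
  (∃ v, C p.1 p.2 = some (false, v)) ∧ NuAdj C p ∧
  ∀ (p' : ℕ × ℕ) (v v' : ℕ), C p.1 p.2 = some (false, v) → C p'.1 p'.2 = some (false, v') →
    NuAdj C p' → v' < v ∨ (v' = v ∧ p'.2 ≤ p.2)

/-- Push Up order: choose a ν-box of the smallest value having μ-content adjacent
above or to the left; among those, the leftmost one. -/
def NuChoice (C : SwitchConfig) (p : ℕ × ℕ) : Prop :=
  (∃ w, C p.1 p.2 = some (true, w)) ∧ MuAdj C p ∧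
  ∀ (p' : ℕ × ℕ) (w w' : ℕ), C p.1 p.2 = some (true, w) → C p'.1 p'.2 = some (true, w') →
    MuAdj C p' → w < w' ∨ (w' = w ∧ p.2 ≤ p'.2)

/-- Complete outward evacuation of the μ-box at `p` through the ν-content. -/
inductive EvacOutConfig : SwitchConfig → ℕ × ℕ → SwitchConfig → Prop
  | done (C : SwitchConfig) (p : ℕ × ℕ) : ¬ NuAdj C p → EvacOutConfig C p C
  | step (C C₁ C' : SwitchConfig) (p q : ℕ × ℕ) :
      SwitchAt C p q C₁ → EvacOutConfig C₁ q C' → EvacOutConfig C p C'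

/-- Complete inward (upper) evacuation of the ν-box at `p` through the μ-content. -/
inductive EvacInConfig : SwitchConfig → ℕ × ℕ → SwitchConfig → Prop
  | done (C : SwitchConfig) (p : ℕ × ℕ) : ¬ MuAdj C p → EvacInConfig C p C
  | step (C C₁ C' : SwitchConfig) (p q : ℕ × ℕ) :
      SwitchAtIn C p q C₁ → EvacInConfig C₁ q C' → EvacInConfig C p C'

/-- Final configuration: no μ-box has ν-content immediately to its right or below,
i.e. the ν-content is partition-shaped with the μ-content in a skew shape below it. -/
def FinalConfig (C : SwitchConfig) : Prop :=
  ∀ p q : ℕ × ℕ, (q = (p.1, p.2 + 1) ∨ q = (p.1 + 1, p.2)) →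
    ¬((∃ v, C p.1 p.2 = some (false, v)) ∧ ∃ w, C q.1 q.2 = some (true, w))

/-- The Push Down algorithm. -/
inductive PushDown : SwitchConfig → SwitchConfig → Prop
  | done (C : SwitchConfig) : FinalConfig C → PushDown C C
  | step (C C₁ C' : SwitchConfig) (p : ℕ × ℕ) :
      MuChoice C p → EvacOutConfig C p C₁ → PushDown C₁ C' → PushDown C C'

/-- The Push Up algorithm. -/
inductive PushUp : SwitchConfig → SwitchConfig → Prop
  | done (C : SwitchConfig) : FinalConfig C → PushUp C C
  | step (C C₁ C' : SwitchConfig) (p : ℕ × ℕ) :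
      NuChoice C p → EvacInConfig C p C₁ → PushUp C₁ C' → PushUp C C'


/-! ### Auxiliary machinery for `rot_properties` -/

/-- Entry bound predicate. -/
def Bnd (l : ℕ) (T : Tab) : Prop := ∀ r j v, T.entry r j = some v → 1 ≤ v ∧ v ≤ l

theorem Tab.ext' {T T' : Tab} (he : T.entry = T'.entry) (hr : T.rows = T'.rows)
    (hc : T.cols = T'.cols) : T = T' := by
  cases T; cases T'; simp_all

@[simp] lemma rot_rows (l : ℕ) (T : Tab) : (rotTab l T).rows = T.rows := rfl
@[simp] lemma rot_cols (l : ℕ) (T : Tab) : (rotTab l T).cols = T.cols := rfl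

lemma rot_entry_in (l : ℕ) (T : Tab) {r j : ℕ} (hr : r < T.rows) (hj : j < T.cols) :
    (rotTab l T).entry r j
      = (T.entry (T.rows - 1 - r) (T.cols - 1 - j)).map (fun v => l + 1 - v) := by
  simp [rotTab, hr, hj]

lemma rot_entry_out (l : ℕ) (T : Tab) {r j : ℕ} (h : ¬(r < T.rows ∧ j < T.cols)) :
    (rotTab l T).entry r j = none := by
  simp only [rotTab]
  rw [if_neg h]

lemma bnd_rot {l : ℕ} {T : Tab} (hb : Bnd l T) : Bnd l (rotTab l T) := by
  intro r j v hv
  by_cases h : r < T.rows ∧ j < T.cols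
  · rw [rot_entry_in l T h.1 h.2] at hv
    rcases Option.map_eq_some_iff.1 hv with ⟨v₀, hv₀, rfl⟩
    have := hb _ _ _ hv₀; omega
  · rw [rot_entry_out l T h] at hv; exact absurd hv (by simp)

lemma rot_rot {l : ℕ} {T : Tab} (pt : IsPTab T) (hb : Bnd l T) :
    rotTab l (rotTab l T) = T := by
  refine Tab.ext' ?_ rfl rfl
  funext r j
  by_cases h : r < T.rows ∧ j < T.cols
  · rw [show (rotTab l (rotTab l T)).entry r j
        = ((rotTab l T).entry (T.rows - 1 - r) (T.cols - 1 - j)).map (fun v => l + 1 - v) from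
        rot_entry_in l _ h.1 h.2]
    rw [rot_entry_in l T (by omega) (by omega)]
    have e1 : T.rows - 1 - (T.rows - 1 - r) = r := by omega
    have e2 : T.cols - 1 - (T.cols - 1 - j) = j := by omega
    rw [e1, e2]
    cases hv : T.entry r j with
    | none => rfl
    | some v =>
      have := hb _ _ _ hv
      simp only [Option.map_some]
      congr 1; omega
  · rw [rot_entry_out l _ (by exact h)]
    rcases not_and_or.1 h with h' | h'
    · exact (pt.row_bound r j (by omega)).symm
    · exact (pt.col_bound r j (by omega)).symm

lemma isPTab_rot {l : ℕ} {T : Tab} (pt : IsPTab T) (hb : Bnd l T) : IsPTab (rotTab l T) := by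
  have hin : ∀ r j v, (rotTab l T).entry r j = some v →
      r < T.rows ∧ j < T.cols ∧ ∃ v₀, T.entry (T.rows - 1 - r) (T.cols - 1 - j) = some v₀ ∧
        v = l + 1 - v₀ ∧ 1 ≤ v₀ ∧ v₀ ≤ l := by
    intro r j v hv
    by_cases h : r < T.rows ∧ j < T.cols
    · rw [rot_entry_in l T h.1 h.2] at hv
      rcases Option.map_eq_some_iff.1 hv with ⟨v₀, hv₀, rfl⟩
      exact ⟨h.1, h.2, v₀, hv₀, rfl, hb _ _ _ hv₀⟩
    · rw [rot_entry_out l T h] at hv; exact absurd hv (by simp)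
  constructor
  · intro r j v hv
    obtain ⟨_, _, v₀, _, rfl, h1, h2⟩ := hin r j v hv; omega
  · intro r j hr
    simp only [rot_rows] at hr
    exact rot_entry_out l T (by omega)
  · intro r j hj
    simp only [rot_cols] at hj
    exact rot_entry_out l T (by omega)
  · intro j hj
    obtain ⟨r₀, hr₀⟩ := pt.no_blank_col (T.cols - 1 - j) (by simp at hj; omega)
    have hr₀lt : r₀ < T.rows := by
      by_contra hge
      rw [pt.row_bound r₀ _ (by omega)] at hr₀; simp at hr₀
    refine ⟨T.rows - 1 - r₀, ?_⟩
    rw [rot_entry_in l T (by omega) (by simpa using hj)]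
    have e1 : T.rows - 1 - (T.rows - 1 - r₀) = r₀ := by omega
    rw [e1]
    simpa using hr₀
  · intro v r r' j j' h1 h2 hrr
    obtain ⟨hr1, hj1, v₀, hv₀, he, hb1, hb2⟩ := hin _ _ _ h1
    obtain ⟨hr2, hj2, v₁, hv₁, he', hb3, hb4⟩ := hin _ _ _ h2
    have : v₀ = v₁ := by omega
    subst this
    have := pt.strip v₀ (T.rows - 1 - r') (T.rows - 1 - r) (T.cols - 1 - j') (T.cols - 1 - j)
      hv₁ hv₀ (by omega)
    omega
  · intro v w r₁ j₁ r₂ j₂ h1 h2 hvw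
    obtain ⟨hr1, hj1, v₀, hv₀, he, hb1, hb2⟩ := hin _ _ _ h1
    obtain ⟨hr2, hj2, w₀, hw₀, he', hb3, hb4⟩ := hin _ _ _ h2
    have hlt : w₀ < v₀ := by omega
    have := pt.shadow w₀ v₀ (T.rows - 1 - r₂) (T.cols - 1 - j₂) (T.rows - 1 - r₁) (T.cols - 1 - j₁)
      hw₀ hv₀ hlt
    omega

lemma bnd_of_swap {l : ℕ} {X Y : Tab} (h : SwapStep X Y) (hb : Bnd l X) : Bnd l Y := by
  obtain ⟨_, _, _, _, r, j, _, h1, h2, h3⟩ := h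
  intro r' j' v hv
  by_cases hc : r' = r ∧ (j' = j ∨ j' = j + 1)
  · obtain ⟨rfl, hj⟩ := hc
    rcases hj with rfl | rfl
    · exact hb _ _ _ (by rw [← h1]; exact hv)
    · exact hb _ _ _ (by rw [← h2]; exact hv)
  · exact hb _ _ _ (by rw [← h3 _ _ hc]; exact hv)

lemma swapStep_symm {X Y : Tab} (h : SwapStep X Y) : SwapStep Y X := by
  obtain ⟨ptX, ptY, hr, hc, r, j, hd, h1, h2, h3⟩ := h
  refine ⟨ptY, ptX, hr.symm, hc.symm, r, j, ?_, h2.symm, h1.symm, fun r' j' hne => (h3 r' j' hne).symm⟩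
  rcases hd with ⟨ha, hs⟩ | ⟨hs, ha⟩
  · exact Or.inr ⟨by rw [h1]; exact hs, by rw [h2]; exact ha⟩
  · exact Or.inl ⟨by rw [h1]; exact ha, by rw [h2]; exact hs⟩

lemma swapStep_rot {l : ℕ} {X Y : Tab} (h : SwapStep X Y) (hbX : Bnd l X) :
    SwapStep (rotTab l X) (rotTab l Y) := by
  obtain ⟨ptX, ptY, hrows, hcols, r, j, hdisj, h1, h2, h3⟩ := h
  have hbY : Bnd l Y := bnd_of_swap ⟨ptX, ptY, hrows, hcols, r, j, hdisj, h1, h2, h3⟩ hbX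
  have hr : r < X.rows := by
    rcases hdisj with ⟨hn, hs⟩ | ⟨hs, hn⟩ <;>
    · by_contra hge
      rw [ptX.row_bound _ _ (by omega)] at hs; simp at hs
  have hj1 : j + 1 < X.cols := by
    rcases hdisj with ⟨hn, hs⟩ | ⟨hs, hn⟩
    · by_contra hge
      rw [ptX.col_bound _ _ (by omega)] at hs; simp at hs
    · by_contra hge
      have hY : (Y.entry r (j+1)).isSome := by rw [h2]; exact hs
      rw [ptY.col_bound _ _ (by omega)] at hY; simp at hY
  refine ⟨isPTab_rot ptX hbX, isPTab_rot ptY hbY, by simp [hrows], by simp [hcols],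
    X.rows - 1 - r, X.cols - 1 - (j + 1), ?_, ?_, ?_, ?_⟩
  · -- the disjunction
    have eA : (rotTab l X).entry (X.rows - 1 - r) (X.cols - 1 - (j+1))
        = (X.entry r (j+1)).map (fun v => l + 1 - v) := by
      rw [rot_entry_in l X (by omega) (by omega)]
      congr 2 <;> omega
    have eB : (rotTab l X).entry (X.rows - 1 - r) (X.cols - 1 - (j+1) + 1)
        = (X.entry r j).map (fun v => l + 1 - v) := by
      rw [rot_entry_in l X (by omega) (by omega)]
      congr 2 <;> omega
    rcases hdisj with ⟨hn, hs⟩ | ⟨hs, hn⟩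
    · refine Or.inr ⟨?_, ?_⟩
      · rw [eA]; simpa using hs
      · rw [eB, hn]; rfl
    · refine Or.inl ⟨?_, ?_⟩
      · rw [eA, hn]; rfl
      · rw [eB]; simpa using hs
  · -- rotY entry at (r', j') = rotX entry at (r', j'+1)
    rw [show (rotTab l Y).entry (X.rows - 1 - r) (X.cols - 1 - (j+1))
        = (Y.entry r (j+1)).map (fun v => l + 1 - v) by
      rw [rot_entry_in l Y (by omega) (by omega)]
      congr 2 <;> omega]
    rw [show (rotTab l X).entry (X.rows - 1 - r) (X.cols - 1 - (j+1) + 1)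
        = (X.entry r j).map (fun v => l + 1 - v) by
      rw [rot_entry_in l X (by omega) (by omega)]
      congr 2 <;> omega]
    rw [h2]
  · rw [show (rotTab l Y).entry (X.rows - 1 - r) (X.cols - 1 - (j+1) + 1)
        = (Y.entry r j).map (fun v => l + 1 - v) by
      rw [rot_entry_in l Y (by omega) (by omega)]
      congr 2 <;> omega]
    rw [show (rotTab l X).entry (X.rows - 1 - r) (X.cols - 1 - (j+1))
        = (X.entry r (j+1)).map (fun v => l + 1 - v) by
      rw [rot_entry_in l X (by omega) (by omega)]
      congr 2 <;> omega]
    rw [h1]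
  · intro r₂ j₂ hne
    by_cases hin : r₂ < X.rows ∧ j₂ < X.cols
    · rw [rot_entry_in l Y (by omega) (by omega), rot_entry_in l X hin.1 hin.2]
      rw [show Y.rows = X.rows from hrows.symm, show Y.cols = X.cols from hcols.symm]
      rw [h3 (X.rows - 1 - r₂) (X.cols - 1 - j₂) (by omega)]
    · rw [rot_entry_out l Y (by omega), rot_entry_out l X (by omega)]
lemma bnd_of_chain {l : ℕ} {X Y : Tab} (h : Relation.ReflTransGen SwapStep X Y) (hb : Bnd l X) :
    Bnd l Y := by
  induction h with
  | refl => exact hb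
  | tail _ hstep ih => exact bnd_of_swap hstep ih

lemma dims_of_chain {X Y : Tab} (h : Relation.ReflTransGen SwapStep X Y) :
    X.rows = Y.rows ∧ X.cols = Y.cols := by
  induction h with
  | refl => exact ⟨rfl, rfl⟩
  | tail _ hstep ih =>
    obtain ⟨_, _, hr, hc, _⟩ := hstep
    exact ⟨ih.1.trans hr, ih.2.trans hc⟩

lemma chain_rot {l : ℕ} {X Y : Tab} (h : Relation.ReflTransGen SwapStep X Y) (hb : Bnd l X) :
    Relation.ReflTransGen SwapStep (rotTab l X) (rotTab l Y) := by
  induction h with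
  | refl => exact Relation.ReflTransGen.refl
  | @tail b c hchain hstep ih =>
    exact ih.tail (swapStep_rot hstep (bnd_of_chain hchain hb))

lemma rowEquiv_rot {l : ℕ} {T T' : Tab} (h : RowEquiv T T') (hb : Bnd l T) :
    RowEquiv (rotTab l T) (rotTab l T') :=
  ⟨isPTab_rot h.1 hb, isPTab_rot h.2.1 (bnd_of_chain h.2.2 hb), chain_rot h.2.2 hb⟩

lemma filledCols_eq_nil {T : Tab} {r : ℕ} (h : ∀ j, T.entry r j = none) : filledCols T r = [] := by
  unfold filledCols
  rw [List.filter_eq_nil_iff]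
  intro j _
  simp [h j]

lemma range_filter_rev (C : ℕ) (p : ℕ → Bool) :
    (List.range C).filter (fun j => p (C - 1 - j))
      = (((List.range C).filter p).map (fun j => C - 1 - j)).reverse := by
  set f : ℕ → ℕ := fun j => C - 1 - j with hf
  have h1 : (List.range C).map f = (List.range C).reverse := by
    rw [List.range_eq_range' (n := C), List.reverse_range']
    simp [hf, ← List.range_eq_range']
  have h2 : ((List.range C).map f).filter p = ((List.range C).filter (fun j => p (f j))).map f := by
    rw [List.filter_map]; rfl
  have h3 : ((List.range C).filter p).reverse = ((List.range C).filter (fun j => p (f j))).map f := by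
    rw [← h2, h1, List.filter_reverse]
  have h4 : ∀ j ∈ (List.range C).filter (fun j => p (f j)), f (f j) = j := by
    intro j hj
    have : j < C := List.mem_range.1 (List.mem_of_mem_filter hj)
    simp only [hf]; omega
  calc (List.range C).filter (fun j => p (f j))
      = ((List.range C).filter (fun j => p (f j))).map (fun j => f (f j)) := by
        rw [List.map_congr_left h4]; simp
    _ = (((List.range C).filter (fun j => p (f j))).map f).map f := by rw [List.map_map]; rfl
    _ = (((List.range C).filter p).reverse).map f := by rw [h3]
    _ = (((List.range C).filter p).map f).reverse := by rw [List.map_reverse]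

lemma filledCols_rot {l : ℕ} {T : Tab} {r : ℕ} (hr : r < T.rows) :
    filledCols (rotTab l T) r
      = ((filledCols T (T.rows - 1 - r)).map (fun j => T.cols - 1 - j)).reverse := by
  unfold filledCols
  rw [rot_cols]
  have hcongr : ∀ j ∈ List.range T.cols,
      ((rotTab l T).entry r j).isSome
        = (T.entry (T.rows - 1 - r) (T.cols - 1 - j)).isSome := by
    intro j hj
    rw [rot_entry_in l T hr (List.mem_range.1 hj)]
    simp
  rw [List.filter_congr (by intro j hj; rw [hcongr j hj])]
  exact range_filter_rev T.cols (fun c => (T.entry (T.rows - 1 - r) c).isSome)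

lemma leftJustified_rot {l : ℕ} {R : Tab} (pt : IsPTab R) (hb : Bnd l R) (hrj : RightJustified R) :
    LeftJustified (rotTab l R) := by
  intro T' hTT' r
  have ptT' : IsPTab T' := hTT'.2.1
  have hbT' : Bnd l T' := bnd_of_chain hTT'.2.2 (bnd_rot hb)
  have hU : RowEquiv R (rotTab l T') := by
    have h := rowEquiv_rot hTT' (bnd_rot hb)
    rwa [rot_rot pt hb] at h
  have hdims := dims_of_chain hTT'.2.2
  have hrowsT' : T'.rows = R.rows := by simpa using hdims.1.symm
  have hcolsT' : T'.cols = R.cols := by simpa using hdims.2.symm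
  have hT'eq : T' = rotTab l (rotTab l T') := (rot_rot ptT' hbT').symm
  by_cases hrlt : r < R.rows
  · have key := hrj (rotTab l T') hU (R.rows - 1 - r)
    conv_rhs => rw [hT'eq]
    rw [filledCols_rot (T := R) hrlt,
        filledCols_rot (T := rotTab l T') (by simp [hrowsT']; omega)]
    rw [List.forall₂_reverse_iff, List.forall₂_map_left_iff, List.forall₂_map_right_iff]
    simp only [rot_rows, rot_cols, hrowsT', hcolsT']
    exact key.imp (fun a b hba => by omega)
  · rw [filledCols_eq_nil (T := rotTab l R) (fun j => rot_entry_out l R (by simp; omega)),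
        filledCols_eq_nil (T := T') (fun j => ptT'.row_bound r j (by omega))]
    exact List.Forall₂.nil

lemma rightJustified_rot {l : ℕ} {L : Tab} (pt : IsPTab L) (hb : Bnd l L) (hlj : LeftJustified L) :
    RightJustified (rotTab l L) := by
  intro T' hTT' r
  have ptT' : IsPTab T' := hTT'.2.1
  have hbT' : Bnd l T' := bnd_of_chain hTT'.2.2 (bnd_rot hb)
  have hU : RowEquiv L (rotTab l T') := by
    have h := rowEquiv_rot hTT' (bnd_rot hb)
    rwa [rot_rot pt hb] at h
  have hdims := dims_of_chain hTT'.2.2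
  have hrowsT' : T'.rows = L.rows := by simpa using hdims.1.symm
  have hcolsT' : T'.cols = L.cols := by simpa using hdims.2.symm
  have hT'eq : T' = rotTab l (rotTab l T') := (rot_rot ptT' hbT').symm
  by_cases hrlt : r < L.rows
  · have key := hlj (rotTab l T') hU (L.rows - 1 - r)
    conv_rhs => rw [hT'eq]
    rw [filledCols_rot (T := L) hrlt,
        filledCols_rot (T := rotTab l T') (by simp [hrowsT']; omega)]
    rw [List.forall₂_reverse_iff, List.forall₂_map_left_iff, List.forall₂_map_right_iff]
    simp only [rot_rows, rot_cols, hrowsT', hcolsT']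
    exact key.imp (fun a b hab => by omega)
  · rw [filledCols_eq_nil (T := rotTab l L) (fun j => rot_entry_out l L (by simp; omega)),
        filledCols_eq_nil (T := T') (fun j => ptT'.row_bound r j (by omega))]
    exact List.Forall₂.nil

lemma rotWord_rotWord {n : ℕ} {w : List ℕ} (h : ∀ a ∈ w, 1 ≤ a ∧ a ≤ n) :
    rotWord n (rotWord n w) = w := by
  unfold rotWord
  rw [List.map_reverse, List.reverse_reverse, List.map_map]
  conv_rhs => rw [← List.map_id w]
  apply List.map_congr_left
  intro a ha
  have := h a ha
  simp only [Function.comp_apply, id_eq]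
  omega
/-! ### Generic list helpers -/

lemma le_foldr_max {x : ℕ} {l : List ℕ} (h : x ∈ l) : x ≤ l.foldr max 0 := by
  induction l with
  | nil => simp at h
  | cons a t ih =>
    rcases List.mem_cons.1 h with rfl | h'
    · simp only [List.foldr_cons]; exact le_max_left _ _
    · simp only [List.foldr_cons]; exact le_max_of_le_right (ih h')

lemma foldr_max_mem (l : List ℕ) : l.foldr max 0 = 0 ∨ l.foldr max 0 ∈ l := by
  induction l with
  | nil => left; rfl
  | cons a t ih =>
    simp only [List.foldr_cons]
    rcases max_choice a (t.foldr max 0) with h | h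
    · right; rw [h]; exact List.mem_cons_self
    · rw [h]
      rcases ih with h0 | hm
      · left; exact h0
      · right; exact List.mem_cons_of_mem _ hm

lemma foldr_max_le {l : List ℕ} {B : ℕ} (h : ∀ x ∈ l, x ≤ B) : l.foldr max 0 ≤ B := by
  induction l with
  | nil => simp
  | cons a t ih =>
    simp only [List.foldr_cons, max_le_iff]
    exact ⟨h a (List.mem_cons_self), ih fun x hx => h x (List.mem_cons_of_mem _ hx)⟩

lemma findSome?_eq_some_of {α β : Type*} {l : List α} {f : α → Option β} {x : α} {v : β}
    (hx : x ∈ l) (hfx : f x = some v)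
    (huniq : ∀ y ∈ l, ∀ w, f y = some w → w = v) : l.findSome? f = some v := by
  induction l with
  | nil => simp at hx
  | cons a t ih =>
    cases hfa : f a with
    | some w =>
      have := huniq a (List.mem_cons_self) w hfa
      simp only [List.findSome?_cons, hfa]
      rw [this]
    | none =>
      rcases List.mem_cons.1 hx with rfl | hx'
      · rw [hfa] at hfx; cases hfx
      · simp only [List.findSome?_cons, hfa]
        exact ih hx' fun y hy => huniq y (List.mem_cons_of_mem _ hy)

lemma findSome?_congr {α β : Type*} {l : List α} {f g : α → Option β}
    (h : ∀ a ∈ l, f a = g a) : l.findSome? f = l.findSome? g := by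
  induction l with
  | nil => rfl
  | cons a t ih =>
    simp only [List.findSome?_cons, h a (List.mem_cons_self)]
    cases g a with
    | some w => rfl
    | none => exact ih fun x hx => h x (List.mem_cons_of_mem _ hx)

/-! ### pfCol and pfBoxes structure -/

lemma pfCol_lt {bs : List (ℕ × ℕ × ℕ)} {row : ℕ} {b : ℕ × ℕ × ℕ}
    (hb : b ∈ bs) (hrow : row ≤ b.1) : b.2.1 < pfCol bs row := by
  have hmem : b.2.1 + 1 ∈ bs.filterMap fun b => if row ≤ b.1 then some (b.2.1 + 1) else none := by
    rw [List.mem_filterMap]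
    exact ⟨b, hb, by rw [if_pos hrow]⟩
  exact le_foldr_max hmem

lemma pfCol_attained {bs : List (ℕ × ℕ × ℕ)} {row : ℕ} (h : 0 < pfCol bs row) :
    ∃ b ∈ bs, row ≤ b.1 ∧ b.2.1 + 1 = pfCol bs row := by
  rcases foldr_max_mem (bs.filterMap fun b => if row ≤ b.1 then some (b.2.1 + 1) else none)
    with h0 | hm
  · unfold pfCol at h; omega
  · rw [List.mem_filterMap] at hm
    obtain ⟨b, hb, hif⟩ := hm
    by_cases hr : row ≤ b.1
    · rw [if_pos hr] at hif
      exact ⟨b, hb, hr, by injection hif⟩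
    · rw [if_neg hr] at hif; cases hif

lemma pfBoxes_append (L₁ L₂ : List (ℕ × ℕ)) (placed : List (ℕ × ℕ × ℕ)) :
    pfBoxes (L₁ ++ L₂) placed = pfBoxes L₂ (pfBoxes L₁ placed) := by
  induction L₁ generalizing placed with
  | nil => rfl
  | cons sa rest ih =>
    simp only [List.cons_append, pfBoxes]
    exact ih _

lemma pfBoxes_prefix (L : List (ℕ × ℕ)) (placed : List (ℕ × ℕ × ℕ)) :
    placed <+: pfBoxes L placed := by
  induction L generalizing placed with
  | nil => exact List.prefix_rfl
  | cons sa rest ih =>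
    exact (List.prefix_append placed _).trans (ih _)

lemma pfBoxes_length (L : List (ℕ × ℕ)) (placed : List (ℕ × ℕ × ℕ)) :
    (pfBoxes L placed).length = placed.length + L.length := by
  induction L generalizing placed with
  | nil => simp [pfBoxes]
  | cons sa rest ih =>
    simp only [pfBoxes, ih, List.length_append, List.length_cons, List.length_nil]
    omega

/-- Row (`0`-indexed) of the `k`-th box produced from letter list `L`. -/
def rowT (L : List (ℕ × ℕ)) (k : ℕ) : ℕ := ((pfBoxes L []).getD k (0, 0, 0)).1
/-- Column of the `k`-th box produced from letter list `L`. -/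
def colT (L : List (ℕ × ℕ)) (k : ℕ) : ℕ := ((pfBoxes L []).getD k (0, 0, 0)).2.1
/-- Value of the `k`-th box produced from letter list `L`. -/
def valT (L : List (ℕ × ℕ)) (k : ℕ) : ℕ := ((pfBoxes L []).getD k (0, 0, 0)).2.2
/-- Number of columns of the tableau produced from letter list `L`. -/
def colsOf (L : List (ℕ × ℕ)) : ℕ := ((pfBoxes L []).map fun b => b.2.1 + 1).foldr max 0

lemma boxSeq_spec (L : List (ℕ × ℕ)) (t : ℕ) (ht : t < L.length) :
    (pfBoxes L []).getD t (0, 0, 0)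
      = ((L.getD t (0, 0)).2 - 1,
          pfCol (pfBoxes (L.take t) []) ((L.getD t (0, 0)).2 - 1),
          (L.getD t (0, 0)).1) := by
  have hsplit : L = L.take t ++ L.drop t := (List.take_append_drop t L).symm
  have hdrop : L.drop t = L.getD t (0, 0) :: L.drop (t + 1) := by
    rw [List.getD_eq_getElem L _ ht]
    exact List.drop_eq_getElem_cons ht
  have h1 : pfBoxes L [] =
      pfBoxes (L.drop (t + 1))
        (pfBoxes (L.take t) [] ++
          [((L.getD t (0, 0)).2 - 1,
            pfCol (pfBoxes (L.take t) []) ((L.getD t (0, 0)).2 - 1),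
            (L.getD t (0, 0)).1)]) := by
    conv_lhs => rw [hsplit]
    rw [pfBoxes_append, hdrop]
    rfl
  have hlen : (pfBoxes (L.take t) []).length = t := by
    rw [pfBoxes_length]
    simp [List.length_take]
    omega
  have hpre : (pfBoxes (L.take t) [] ++
      [((L.getD t (0, 0)).2 - 1,
        pfCol (pfBoxes (L.take t) []) ((L.getD t (0, 0)).2 - 1),
        (L.getD t (0, 0)).1)]) <+: pfBoxes L [] := by
    rw [h1]; exact pfBoxes_prefix _ _
  have hlt : t < (pfBoxes (L.take t) [] ++
      [((L.getD t (0, 0)).2 - 1,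
        pfCol (pfBoxes (L.take t) []) ((L.getD t (0, 0)).2 - 1),
        (L.getD t (0, 0)).1)]).length := by
    rw [List.length_append, hlen]; simp
  have htot : t < (pfBoxes L []).length := by
    rw [pfBoxes_length]; simpa using ht
  rw [List.getD_eq_getElem _ _ htot, ← hpre.getElem hlt]
  rw [List.getElem_append_right (by omega)]
  simp [hlen]

lemma take_prefix_boxes (L : List (ℕ × ℕ)) (t : ℕ) :
    pfBoxes (L.take t) [] <+: pfBoxes L [] := by
  conv_rhs => rw [← List.take_append_drop t L]
  rw [pfBoxes_append]
  exact pfBoxes_prefix _ _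

lemma rowT_eq (L : List (ℕ × ℕ)) {t : ℕ} (ht : t < L.length) :
    rowT L t = (L.getD t (0, 0)).2 - 1 := by
  unfold rowT; rw [boxSeq_spec L t ht]

lemma valT_eq (L : List (ℕ × ℕ)) {t : ℕ} (ht : t < L.length) :
    valT L t = (L.getD t (0, 0)).1 := by
  unfold valT; rw [boxSeq_spec L t ht]

lemma colT_eq (L : List (ℕ × ℕ)) {t : ℕ} (ht : t < L.length) :
    colT L t = pfCol (pfBoxes (L.take t) []) (rowT L t) := by
  unfold colT
  rw [boxSeq_spec L t ht, rowT_eq L ht]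

lemma boxes_getD_take (L : List (ℕ × ℕ)) {i t : ℕ} (hi : i < t) (ht : t ≤ L.length) :
    (pfBoxes (L.take t) []).getD i (0, 0, 0) = (pfBoxes L []).getD i (0, 0, 0) := by
  have hlen : (pfBoxes (L.take t) []).length = t := by
    rw [pfBoxes_length]; simp [List.length_take]; omega
  have h1 : i < (pfBoxes (L.take t) []).length := by omega
  have h2 : i < (pfBoxes L []).length := by rw [pfBoxes_length]; simp; omega
  rw [List.getD_eq_getElem _ _ h1, List.getD_eq_getElem _ _ h2]
  exact (take_prefix_boxes L t).getElem h1

lemma colT_K (L : List (ℕ × ℕ)) {i j : ℕ} (hij : i < j) (hj : j < L.length)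
    (hrow : rowT L j ≤ rowT L i) : colT L i < colT L j := by
  rw [colT_eq L hj]
  have hlen : (pfBoxes (L.take j) []).length = j := by
    rw [pfBoxes_length]; simp [List.length_take]; omega
  have hmem : (pfBoxes L []).getD i (0, 0, 0) ∈ pfBoxes (L.take j) [] := by
    rw [← boxes_getD_take L hij (by omega)]
    rw [List.getD_eq_getElem _ _ (by omega)]
    exact List.getElem_mem _
  exact pfCol_lt hmem hrow

lemma colT_attained (L : List (ℕ × ℕ)) {t : ℕ} (ht : t < L.length) (h : 0 < colT L t) :
    ∃ i < t, rowT L t ≤ rowT L i ∧ colT L i + 1 = colT L t := by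
  rw [colT_eq L ht] at h ⊢
  obtain ⟨b, hb, hrow, hcol⟩ := pfCol_attained h
  have hlen : (pfBoxes (L.take t) []).length = t := by
    rw [pfBoxes_length]; simp [List.length_take]; omega
  obtain ⟨i, hi, hbi⟩ := List.mem_iff_getElem.1 hb
  have key : (pfBoxes L []).getD i (0, 0, 0) = b := by
    rw [← boxes_getD_take L (i := i) (t := t) (by omega) (by omega),
      List.getD_eq_getElem _ _ hi, hbi]
  refine ⟨i, by omega, ?_, ?_⟩
  · rw [show rowT L i = b.1 by unfold rowT; rw [key]]
    exact hrow
  · rw [show colT L i = b.2.1 by unfold colT; rw [key]]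
    exact hcol

lemma colT_lt_cols (L : List (ℕ × ℕ)) {k : ℕ} (hk : k < L.length) : colT L k < colsOf L := by
  have hlen : k < (pfBoxes L []).length := by rw [pfBoxes_length]; simpa using hk
  have hmem : colT L k + 1 ∈ (pfBoxes L []).map fun b => b.2.1 + 1 := by
    rw [List.mem_map]
    exact ⟨(pfBoxes L []).getD k (0, 0, 0),
      by rw [List.getD_eq_getElem _ _ hlen]; exact List.getElem_mem _, rfl⟩
  have := le_foldr_max hmem
  unfold colsOf; omega

lemma cols_attained (L : List (ℕ × ℕ)) (hL : 0 < L.length) :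
    ∃ k < L.length, colT L k + 1 = colsOf L := by
  rcases foldr_max_mem ((pfBoxes L []).map fun b => b.2.1 + 1) with h0 | hm
  · exfalso
    have hlen : 0 < (pfBoxes L []).length := by rw [pfBoxes_length]; simpa using hL
    have hmem : colT L 0 + 1 ∈ (pfBoxes L []).map fun b => b.2.1 + 1 := by
      rw [List.mem_map]
      exact ⟨(pfBoxes L []).getD 0 (0, 0, 0),
        by rw [List.getD_eq_getElem _ _ hlen]; exact List.getElem_mem _, rfl⟩
    have := le_foldr_max hmem
    unfold colsOf at h0; omega
  · rw [List.mem_map] at hm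
    obtain ⟨b, hb, hcol⟩ := hm
    obtain ⟨i, hi, hbi⟩ := List.mem_iff_getElem.1 hb
    refine ⟨i, by rw [pfBoxes_length] at hi; simpa using hi, ?_⟩
    rw [show colT L i = b.2.1 by unfold colT; rw [List.getD_eq_getElem _ _ hi, hbi]]
    exact hcol

lemma colsOf_nil : colsOf [] = 0 := rfl
/-! ### indexedLetters lemmas -/

lemma indexedLetters_append (P₁ P₂ : List (List ℕ)) (s : ℕ) :
    indexedLetters (P₁ ++ P₂) s = indexedLetters P₁ s ++ indexedLetters P₂ (s + P₁.length) := by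
  induction P₁ generalizing s with
  | nil => simp [indexedLetters]
  | cons h t ih =>
    show (h.map fun a => (s, a)) ++ indexedLetters (t ++ P₂) (s + 1)
        = ((h.map fun a => (s, a)) ++ indexedLetters t (s + 1))
          ++ indexedLetters P₂ (s + (h :: t).length)
    rw [ih, List.append_assoc, List.length_cons,
      show s + (t.length + 1) = s + 1 + t.length from by omega]

lemma indexedLetters_shift (P : List (List ℕ)) (s : ℕ) :
    indexedLetters P (s + 1) = (indexedLetters P s).map (fun x => (x.1 + 1, x.2)) := by
  induction P generalizing s with
  | nil => rfl
  | cons h t ih =>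
    simp only [indexedLetters, List.map_append, List.map_map, ih (s + 1)]
    rfl

lemma indexedLetters_length (P : List (List ℕ)) (s : ℕ) :
    (indexedLetters P s).length = (P.map List.length).sum := by
  induction P generalizing s with
  | nil => rfl
  | cons h t ih => simp [indexedLetters, ih]

lemma il_mem_spec {P : List (List ℕ)} {s₀ : ℕ} {x : ℕ × ℕ}
    (hx : x ∈ indexedLetters P s₀) :
    s₀ ≤ x.1 ∧ x.1 < s₀ + P.length ∧ ∃ h ∈ P, x.2 ∈ h := by
  induction P generalizing s₀ with
  | nil => simp [indexedLetters] at hx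
  | cons h t ih =>
    simp only [indexedLetters, List.mem_append] at hx
    rcases hx with hx | hx
    · obtain ⟨a, ha, rfl⟩ := List.mem_map.1 hx
      exact ⟨le_refl _, by show s₀ < s₀ + (h :: t).length; simp, h, List.mem_cons_self, ha⟩
    · obtain ⟨h1, h2, g, hg, hag⟩ := ih hx
      exact ⟨by omega, by simp; omega, g, List.mem_cons_of_mem _ hg, hag⟩

lemma il_pairwise {P : List (List ℕ)} (hP : ∀ h ∈ P, List.Chain' (fun a b => b ≤ a) h)
    (s₀ : ℕ) :
    List.Pairwise (fun x y : ℕ × ℕ => x.1 < y.1 ∨ (x.1 = y.1 ∧ y.2 ≤ x.2))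
      (indexedLetters P s₀) := by
  induction P generalizing s₀ with
  | nil => simp [indexedLetters]
  | cons h t ih =>
    simp only [indexedLetters]
    rw [List.pairwise_append]
    refine ⟨?_, ih (fun g hg => hP g (List.mem_cons_of_mem _ hg)) (s₀ + 1), ?_⟩
    · rw [List.pairwise_map]
      have hc := hP h (List.mem_cons_self)
      have hpw : List.Pairwise (fun a b => b ≤ a) h := by
        rw [← List.isChain_iff_pairwise]
        exact hc
      exact hpw.imp fun hab => Or.inr ⟨rfl, hab⟩
    · intro a ha b hb
      obtain ⟨a', _, rfl⟩ := List.mem_map.1 ha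
      have := (il_mem_spec hb).1
      left; show s₀ < b.1; omega

lemma il_rot (n : ℕ) (P : List (List ℕ)) (s₀ : ℕ) :
    indexedLetters ((P.map (rotWord n)).reverse) s₀
      = ((indexedLetters P 1).map (fun x => (s₀ + P.length - x.1, n + 1 - x.2))).reverse := by
  induction P generalizing s₀ with
  | nil => rfl
  | cons h t ih =>
    have lhseq : (((h :: t).map (rotWord n)).reverse : List (List ℕ))
        = (t.map (rotWord n)).reverse ++ [rotWord n h] := by simp
    rw [lhseq, indexedLetters_append, ih s₀]
    have hlen : ((t.map (rotWord n)).reverse).length = t.length := by simp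
    rw [hlen]
    have hsingle : indexedLetters [rotWord n h] (s₀ + t.length)
        = (rotWord n h).map (fun a => (s₀ + t.length, a)) := by
      simp [indexedLetters]
    rw [hsingle]
    have hrhs : indexedLetters (h :: t) 1
        = h.map (fun a => (1, a)) ++ (indexedLetters t 1).map (fun x => (x.1 + 1, x.2)) := by
      simp only [indexedLetters]
      rw [← indexedLetters_shift]
    rw [hrhs, List.map_append, List.reverse_append]
    congr 1
    · -- tail part
      rw [List.map_map]
      congr 1
      apply List.map_congr_left
      intro x _
      simp only [Function.comp_apply, List.length_cons]
      congr 1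
      omega
    · -- head part
      unfold rotWord
      rw [List.map_reverse, List.map_map, List.map_map]
      congr 1

/-! ### tabOf and cfg tableaux with entry characterizations -/

/-- The tableau built from a letter list (matches `Pf`). -/
def tabOf (L : List (ℕ × ℕ)) (n : ℕ) : Tab :=
  let boxes := pfBoxes L []
  { entry := fun r j =>
      boxes.findSome? fun b => if b.1 = r ∧ b.2.1 = j then some b.2.2 else none
    rows := n
    cols := (boxes.map fun b => b.2.1 + 1).foldr max 0 }

lemma Pf_eq_tabOf (P : List (List ℕ)) (n : ℕ) : Pf P n = tabOf (indexedLetters P 1) n := rfl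

lemma tabOf_cols (L : List (ℕ × ℕ)) (n : ℕ) : (tabOf L n).cols = colsOf L := rfl

lemma tabOf_entry_some_iff {L : List (ℕ × ℕ)} {n : ℕ}
    (hdist : ∀ i k, i < k → k < L.length → rowT L i = rowT L k → colT L i ≠ colT L k)
    (r j v : ℕ) :
    (tabOf L n).entry r j = some v ↔
      ∃ k, k < L.length ∧ rowT L k = r ∧ colT L k = j ∧ valT L k = v := by
  have hlen : (pfBoxes L []).length = L.length := by rw [pfBoxes_length]; simp
  constructor
  · intro h
    obtain ⟨b, hb, hfb⟩ := List.exists_of_findSome?_eq_some h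
    obtain ⟨k, hk, hbk⟩ := List.mem_iff_getElem.1 hb
    by_cases hc : b.1 = r ∧ b.2.1 = j
    · rw [if_pos hc] at hfb
      refine ⟨k, by omega, ?_, ?_, ?_⟩
      · rw [show rowT L k = b.1 by unfold rowT; rw [List.getD_eq_getElem _ _ hk, hbk]]
        exact hc.1
      · rw [show colT L k = b.2.1 by unfold colT; rw [List.getD_eq_getElem _ _ hk, hbk]]
        exact hc.2
      · rw [show valT L k = b.2.2 by unfold valT; rw [List.getD_eq_getElem _ _ hk, hbk]]
        injection hfb
    · rw [if_neg hc] at hfb; cases hfb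
  · rintro ⟨k, hk, hr, hc, hv⟩
    have hk' : k < (pfBoxes L []).length := by omega
    apply findSome?_eq_some_of (x := (pfBoxes L []).getD k (0, 0, 0))
    · rw [List.getD_eq_getElem _ _ hk']; exact List.getElem_mem _
    · rw [if_pos ⟨hr, hc⟩]
      show some (valT L k) = some v
      rw [hv]
    · intro y hy w hw
      obtain ⟨k', hk'', hyk⟩ := List.mem_iff_getElem.1 hy
      by_cases hc' : y.1 = r ∧ y.2.1 = j
      · rw [if_pos hc'] at hw
        have hrow' : rowT L k' = r := by
          unfold rowT; rw [List.getD_eq_getElem _ _ hk'', hyk]; exact hc'.1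
        have hcol' : colT L k' = j := by
          unfold colT; rw [List.getD_eq_getElem _ _ hk'', hyk]; exact hc'.2
        have hkk : k' = k := by
          by_contra hne
          rcases Nat.lt_or_ge k' k with hlt | hge
          · exact hdist k' k hlt (by omega) (by rw [hrow', hr]) (by rw [hcol', hc])
          · exact hdist k k' (by omega) (by omega) (by rw [hrow', hr]) (by rw [hcol', hc])
        subst hkk
        have : y = (pfBoxes L []).getD k' (0, 0, 0) := by
          rw [List.getD_eq_getElem _ _ hk'', hyk]
        rw [← hv, show valT L k' = y.2.2 by unfold valT; rw [← this]]
        injection hw with hw; exact hw.symm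
      · rw [if_neg hc'] at hw; cases hw

lemma tabOf_entry_none_iff {L : List (ℕ × ℕ)} {n : ℕ}
    (hdist : ∀ i k, i < k → k < L.length → rowT L i = rowT L k → colT L i ≠ colT L k)
    (r j : ℕ) :
    (tabOf L n).entry r j = none ↔
      ∀ k, k < L.length → ¬(rowT L k = r ∧ colT L k = j) := by
  constructor
  · intro h k hk ⟨hr, hc⟩
    have : (tabOf L n).entry r j = some (valT L k) :=
      (tabOf_entry_some_iff hdist r j (valT L k)).2 ⟨k, hk, hr, hc, rfl⟩
    rw [h] at this; cases this
  · intro h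
    show List.findSome? (fun b => if b.1 = r ∧ b.2.1 = j then some b.2.2 else none)
      (pfBoxes L []) = none
    rw [List.findSome?_eq_none_iff]
    intro b hb
    obtain ⟨k, hk, hbk⟩ := List.mem_iff_getElem.1 hb
    have hlen : (pfBoxes L []).length = L.length := by rw [pfBoxes_length]; simp
    rw [if_neg]
    intro ⟨h1, h2⟩
    exact h k (by omega) ⟨by unfold rowT; rw [List.getD_eq_getElem _ _ hk, hbk]; exact h1,
      by unfold colT; rw [List.getD_eq_getElem _ _ hk, hbk]; exact h2⟩

/-- Tableau of a configuration of `m` boxes given by row / column / value functions. -/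
def cfg (n C m : ℕ) (rw x vl : ℕ → ℕ) : Tab :=
  { entry := fun r c =>
      (List.range m).findSome? fun k => if rw k = r ∧ x k = c then some (vl k) else none
    rows := n
    cols := C }

lemma cfg_entry_some_iff {n C m : ℕ} {rw x vl : ℕ → ℕ}
    (hinj : ∀ i k, i < m → k < m → i ≠ k → rw i = rw k → x i ≠ x k)
    (r c v : ℕ) :
    (cfg n C m rw x vl).entry r c = some v ↔
      ∃ k, k < m ∧ rw k = r ∧ x k = c ∧ vl k = v := by
  constructor
  · intro h
    obtain ⟨k, hk, hfk⟩ := List.exists_of_findSome?_eq_some h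
    rw [List.mem_range] at hk
    by_cases hc : rw k = r ∧ x k = c
    · rw [if_pos hc] at hfk
      exact ⟨k, hk, hc.1, hc.2, by injection hfk⟩
    · rw [if_neg hc] at hfk; cases hfk
  · rintro ⟨k, hk, hr, hc, hv⟩
    apply findSome?_eq_some_of (x := k)
    · exact List.mem_range.2 hk
    · rw [if_pos ⟨hr, hc⟩, hv]
    · intro y hy w hw
      rw [List.mem_range] at hy
      by_cases hc' : rw y = r ∧ x y = c
      · rw [if_pos hc'] at hw
        have : y = k := by
          by_contra hne
          exact hinj y k hy hk hne (by rw [hc'.1, hr]) (by rw [hc'.2, hc])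
        subst this
        rw [← hv]
        injection hw with hw; exact hw.symm
      · rw [if_neg hc'] at hw; cases hw

lemma cfg_entry_none_iff {n C m : ℕ} {rw x vl : ℕ → ℕ}
    (hinj : ∀ i k, i < m → k < m → i ≠ k → rw i = rw k → x i ≠ x k)
    (r c : ℕ) :
    (cfg n C m rw x vl).entry r c = none ↔
      ∀ k, k < m → ¬(rw k = r ∧ x k = c) := by
  constructor
  · intro h k hk ⟨hr, hc⟩
    have : (cfg n C m rw x vl).entry r c = some (vl k) :=
      (cfg_entry_some_iff hinj r c (vl k)).2 ⟨k, hk, hr, hc, rfl⟩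
    rw [h] at this; cases this
  · intro h
    show List.findSome? (fun k => if rw k = r ∧ x k = c then some (vl k) else none)
      (List.range m) = none
    rw [List.findSome?_eq_none_iff]
    intro k hk
    rw [List.mem_range] at hk
    rw [if_neg]
    exact h k hk
/-! ### The interpolation chain between two configurations -/

theorem config_main (n C m : ℕ) (rw vl a b : ℕ → ℕ)
    (hsame : ∀ i j, i < m → j < m → i ≠ j → rw i = rw j →
      (a i < a j ∧ b i < b j) ∨ (a j < a i ∧ b j < b i))
    (hstrip : ∀ i j, i < m → j < m → vl i = vl j → rw i < rw j → a j < a i ∧ b j < b i)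
    (hshadow : ∀ i j, i < m → j < m → vl i < vl j → ¬ rw i < rw j → a i < a j ∧ b i < b j)
    (hab : ∀ k, k < m → a k ≤ b k)
    (hcover : ∀ c, c < C → ∃ k, k < m ∧ a k = c ∧ b k = c)
    (hrowlt : ∀ k, k < m → rw k < n)
    (hcollt : ∀ k, k < m → b k < C)
    (hval : ∀ k, k < m → 1 ≤ vl k) :
    RowEquiv (cfg n C m rw a vl) (cfg n C m rw b vl) := by
  classical
  have hinj : ∀ x : ℕ → ℕ,
      (∀ i j, i < m → j < m → a i < a j → b i < b j → x i < x j) →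
      ∀ i k, i < m → k < m → i ≠ k → rw i = rw k → x i ≠ x k := by
    intro x hx2 i k hi hk hne hrw
    rcases hsame i k hi hk hne hrw with ⟨h1, h2⟩ | ⟨h1, h2⟩
    · exact Nat.ne_of_lt (hx2 i k hi hk h1 h2)
    · exact (Nat.ne_of_lt (hx2 k i hk hi h1 h2)).symm
  have hPT : ∀ x : ℕ → ℕ,
      (∀ k, k < m → a k ≤ x k ∧ x k ≤ b k) →
      (∀ i j, i < m → j < m → a i < a j → b i < b j → x i < x j) →
      IsPTab (cfg n C m rw x vl) := by
    intro x hx1 hx2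
    have hinjx := hinj x hx2
    constructor
    · intro r c v hv
      obtain ⟨k, hk, _, _, rfl⟩ := (cfg_entry_some_iff hinjx r c v).1 hv
      exact hval k hk
    · intro r c hr
      have hr' : n ≤ r := hr
      rw [cfg_entry_none_iff hinjx]
      intro k hk ⟨hrk, _⟩
      have := hrowlt k hk
      omega
    · intro r c hc
      have hc' : C ≤ c := hc
      rw [cfg_entry_none_iff hinjx]
      intro k hk ⟨_, hxk⟩
      have h1 := (hx1 k hk).2
      have := hcollt k hk
      omega
    · intro c hc
      have hc' : c < C := hc
      obtain ⟨k, hk, hak, hbk⟩ := hcover c hc'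
      refine ⟨rw k, ?_⟩
      have hx := hx1 k hk
      have hxc : x k = c := by omega
      rw [(cfg_entry_some_iff hinjx (rw k) c (vl k)).2 ⟨k, hk, rfl, hxc, rfl⟩]
      rfl
    · intro v r r' c c' h1 h2 hrr
      obtain ⟨k, hk, hrk, hck, hvk⟩ := (cfg_entry_some_iff hinjx r c v).1 h1
      obtain ⟨k', hk', hrk', hck', hvk'⟩ := (cfg_entry_some_iff hinjx r' c' v).1 h2
      have hcon := hstrip k k' hk hk' (by rw [hvk, hvk']) (by omega)
      have := hx2 k' k hk' hk hcon.1 hcon.2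
      omega
    · intro v w r₁ c₁ r₂ c₂ h1 h2 hvw
      obtain ⟨k, hk, hrk, hck, hvk⟩ := (cfg_entry_some_iff hinjx r₁ c₁ v).1 h1
      obtain ⟨k', hk', hrk', hck', hvk'⟩ := (cfg_entry_some_iff hinjx r₂ c₂ w).1 h2
      by_cases hrc : rw k < rw k'
      · left; omega
      · right
        have hcon := hshadow k k' hk hk' (by omega) hrc
        have := hx2 k k' hk hk' hcon.1 hcon.2
        omega
  have hchain : ∀ N (x : ℕ → ℕ),
      (∀ k, k < m → a k ≤ x k ∧ x k ≤ b k) →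
      (∀ i j, i < m → j < m → a i < a j → b i < b j → x i < x j) →
      (∑ k ∈ Finset.range m, (x k - a k)) = N →
      Relation.ReflTransGen SwapStep (cfg n C m rw x vl) (cfg n C m rw a vl) := by
    intro N
    induction N using Nat.strong_induction_on with
    | _ N ih =>
      intro x hx1 hx2 hN
      by_cases hfin : ∀ k, k < m → x k = a k
      · have heq : cfg n C m rw x vl = cfg n C m rw a vl := by
          refine Tab.ext' ?_ rfl rfl
          funext r c
          apply findSome?_congr
          intro k hk
          rw [List.mem_range] at hk
          rw [hfin k hk]
        rw [heq]
      · push_neg at hfin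
        obtain ⟨k₀, hk₀, hx₀ne⟩ := hfin
        have hSne : ((Finset.range m).filter (fun k => a k < x k)).Nonempty :=
          ⟨k₀, Finset.mem_filter.2 ⟨Finset.mem_range.2 hk₀,
            lt_of_le_of_ne (hx1 k₀ hk₀).1 (Ne.symm hx₀ne)⟩⟩
        obtain ⟨i₀, hi₀mem, hi₀min⟩ := Finset.exists_min_image _ a hSne
        rw [Finset.mem_filter, Finset.mem_range] at hi₀mem
        obtain ⟨hi₀m, hi₀lt⟩ := hi₀mem
        have hfin' : ∀ j, j < m → a j < a i₀ → x j = a j := by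
          intro j hj haj
          by_contra hne
          have hjS : j ∈ (Finset.range m).filter (fun k => a k < x k) :=
            Finset.mem_filter.2 ⟨Finset.mem_range.2 hj,
              lt_of_le_of_ne (hx1 j hj).1 (Ne.symm hne)⟩
          have := hi₀min j hjS
          omega
        set x' : ℕ → ℕ := Function.update x i₀ (x i₀ - 1) with hx'def
        have hx'eval : ∀ k, x' k = if k = i₀ then x i₀ - 1 else x k := by
          intro k
          by_cases h : k = i₀
          · subst h; simp [hx'def]
          · simp [hx'def, Function.update, h]
        have hx'1 : ∀ k, k < m → a k ≤ x' k ∧ x' k ≤ b k := by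
          intro k hk
          rw [hx'eval]
          split_ifs with h
          · subst h
            have := hx1 k hk
            omega
          · exact hx1 k hk
        have hx'2 : ∀ i j, i < m → j < m → a i < a j → b i < b j → x' i < x' j := by
          intro i j hi hj hai hbi
          rw [hx'eval, hx'eval]
          by_cases hji : j = i₀
          · subst hji
            have hii : i ≠ j := by intro h; subst h; omega
            rw [if_neg hii, if_pos rfl]
            have hxi := hfin' i hi hai
            omega
          · rw [if_neg hji]
            by_cases hii : i = i₀
            · subst hii
              rw [if_pos rfl]
              have := hx2 i j hi hj hai hbi
              omega
            · rw [if_neg hii]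
              exact hx2 i j hi hj hai hbi
        have hxgt : 0 < x i₀ := by omega
        have hnoblank : ∀ k, k < m → rw k = rw i₀ → x k ≠ x i₀ - 1 := by
          intro k hk hrwk hxk
          by_cases hki : k = i₀
          · subst hki; omega
          rcases hsame k i₀ hk hi₀m hki hrwk with ⟨h1, h2⟩ | ⟨h1, h2⟩
          · have hxk' := hfin' k hk h1
            omega
          · have := hx2 i₀ k hi₀m hk h1 h2
            omega
        have hinjx := hinj x hx2
        have hinjx' := hinj x' hx'2
        have hnone : (cfg n C m rw x vl).entry (rw i₀) (x i₀ - 1) = none := by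
          rw [cfg_entry_none_iff hinjx]
          intro k hk ⟨h1, h2⟩
          exact hnoblank k hk h1 h2
        have hsome : (cfg n C m rw x vl).entry (rw i₀) (x i₀) = some (vl i₀) :=
          (cfg_entry_some_iff hinjx _ _ _).2 ⟨i₀, hi₀m, rfl, rfl, rfl⟩
        have hsome' : (cfg n C m rw x' vl).entry (rw i₀) (x i₀ - 1) = some (vl i₀) :=
          (cfg_entry_some_iff hinjx' _ _ _).2 ⟨i₀, hi₀m, rfl, by rw [hx'eval]; simp, rfl⟩
        have hnone' : (cfg n C m rw x' vl).entry (rw i₀) (x i₀) = none := by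
          rw [cfg_entry_none_iff hinjx']
          intro k hk ⟨h1, h2⟩
          rw [hx'eval] at h2
          by_cases hki : k = i₀
          · rw [if_pos hki] at h2; omega
          · rw [if_neg hki] at h2
            exact hinjx k i₀ hk hi₀m hki h1 h2
        have hstep : SwapStep (cfg n C m rw x vl) (cfg n C m rw x' vl) := by
          refine ⟨hPT x hx1 hx2, hPT x' hx'1 hx'2, rfl, rfl, rw i₀, x i₀ - 1, ?_, ?_, ?_, ?_⟩
          · left
            refine ⟨hnone, ?_⟩
            rw [show x i₀ - 1 + 1 = x i₀ by omega, hsome]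
            rfl
          · rw [hsome', show x i₀ - 1 + 1 = x i₀ by omega, hsome]
          · rw [show x i₀ - 1 + 1 = x i₀ by omega, hnone', hnone]
          · intro r₂ c₂ hne₂
            apply findSome?_congr
            intro k hk
            rw [List.mem_range] at hk
            by_cases hki : k = i₀
            · subst hki
              rw [hx'eval, if_pos rfl]
              have hcnd : ¬(rw k = r₂ ∧ x k - 1 = c₂) ∧ ¬(rw k = r₂ ∧ x k = c₂) := by
                constructor
                · rintro ⟨u, v⟩
                  exact hne₂ ⟨u.symm, Or.inl v.symm⟩
                · rintro ⟨u, v⟩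
                  exact hne₂ ⟨u.symm, Or.inr (by omega)⟩
              rw [if_neg hcnd.1, if_neg hcnd.2]
            · rw [hx'eval, if_neg hki]
        have hmeas : (fun k => x' k - a k) = Function.update (fun k => x k - a k) i₀ (x i₀ - 1 - a i₀) := by
          funext k
          by_cases h : k = i₀
          · subst h; rw [hx'eval, if_pos rfl]; simp [Function.update]
          · rw [hx'eval, if_neg h]; simp [Function.update, h]
        have hsum' : ∑ k ∈ Finset.range m, (x' k - a k)
            = (x i₀ - 1 - a i₀) + ∑ k ∈ Finset.range m \ {i₀}, (x k - a k) := by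
          calc ∑ k ∈ Finset.range m, (x' k - a k)
              = ∑ k ∈ Finset.range m, Function.update (fun k => x k - a k) i₀ (x i₀ - 1 - a i₀) k := by
                rw [← hmeas]
            _ = _ := Finset.sum_update_of_mem (Finset.mem_range.2 hi₀m) _ _
        have hsum : ∑ k ∈ Finset.range m, (x k - a k)
            = (x i₀ - a i₀) + ∑ k ∈ Finset.range m \ {i₀}, (x k - a k) := by
          rw [Finset.sum_eq_sum_sdiff_singleton_add (Finset.mem_range.2 hi₀m)]
          omega
        have hN' : ∑ k ∈ Finset.range m, (x' k - a k) < N := by omega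
        exact Relation.ReflTransGen.head hstep (ih _ hN' x' hx'1 hx'2 rfl)
  have hGa1 : ∀ k, k < m → a k ≤ a k ∧ a k ≤ b k := fun k hk => ⟨le_refl _, hab k hk⟩
  have hGa2 : ∀ i j, i < m → j < m → a i < a j → b i < b j → a i < a j := fun _ _ _ _ h _ => h
  have hGb1 : ∀ k, k < m → a k ≤ b k ∧ b k ≤ b k := fun k hk => ⟨hab k hk, le_refl _⟩
  have hGb2 : ∀ i j, i < m → j < m → a i < a j → b i < b j → b i < b j := fun _ _ _ _ _ h => h
  refine ⟨hPT a hGa1 hGa2, hPT b hGb1 hGb2, ?_⟩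
  have hba := hchain _ b hGb1 hGb2 rfl
  exact (by haveI : Std.Symm SwapStep := ⟨fun _ _ h => swapStep_symm h⟩; exact Std.Symm.symm _ _ hba)
/-! ### The two key inequalities between the greedy columns of a word and its rotation -/

lemma claims_lemma (m C : ℕ) (ρ γ aF : ℕ → ℕ)
    (hKP : ∀ i j, i < j → j < m → ρ j ≤ ρ i → γ i < γ j)
    (hKA : ∀ i j, i < j → j < m → ρ j ≤ ρ i → aF j < aF i)
    (hattP : ∀ k, k < m → 0 < γ k → ∃ i, i < k ∧ ρ k ≤ ρ i ∧ γ i + 1 = γ k)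
    (hattA : ∀ k, k < m → 0 < aF k → ∃ j, k < j ∧ j < m ∧ ρ j ≤ ρ k ∧ aF j + 1 = aF k)
    (hγlt : ∀ k, k < m → γ k < C)
    (hCatt : 0 < C → ∃ k, k < m ∧ γ k + 1 = C) :
    (∀ k, k < m → aF k + γ k + 1 ≤ C) ∧
      (∀ c, c < C → ∃ k, k < m ∧ aF k = c ∧ γ k = C - 1 - c) := by
  have claim1 : ∀ N k, k < m → aF k ≤ N → aF k + γ k + 1 ≤ C := by
    intro N
    induction N with
    | zero =>
      intro k hk hle
      have := hγlt k hk
      omega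
    | succ N ihN =>
      intro k hk hle
      by_cases h0 : aF k = 0
      · have := hγlt k hk; omega
      · obtain ⟨j, hkj, hj, hρ, hAj⟩ := hattA k hk (by omega)
        have h1 := ihN j hj (by omega)
        have h2 := hKP k j hkj hj hρ
        omega
  refine ⟨fun k hk => claim1 (aF k) k hk (le_refl _), ?_⟩
  intro c
  induction c with
  | zero =>
    intro hc
    obtain ⟨k, hk, hγk⟩ := hCatt hc
    have := claim1 (aF k) k hk (le_refl _)
    exact ⟨k, hk, by omega, by omega⟩
  | succ c ihc =>
    intro hc
    obtain ⟨k, hk, hak, hγk⟩ := ihc (by omega)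
    have hγpos : 0 < γ k := by omega
    obtain ⟨i, hik, hρ, hγi⟩ := hattP k hk hγpos
    have him : i < m := by omega
    have h1 := hKA i k hik hk hρ
    have h2 := claim1 (aF i) i him (le_refl _)
    exact ⟨i, him, by omega, by omega⟩

/-! ### `Pf` commutes with rotation up to row equivalence -/

theorem pf_rot (n : ℕ) (P : List (List ℕ)) (hPP : IsParsedWord n P) :
    RowEquiv (Pf (rotParse n P) n) (rotTab P.length (Pf P n)) := by
  obtain ⟨hdec, hbnd⟩ := hPP
  set l := P.length with hl
  set Lp := indexedLetters P 1 with hLp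
  set Lq := indexedLetters (rotParse n P) 1 with hLq
  set m := Lp.length with hm
  set C := colsOf Lp with hC
  have hLqeq : Lq = (Lp.map fun x : ℕ × ℕ => (1 + l - x.1, n + 1 - x.2)).reverse := by
    rw [hLq, hLp, hl]
    show indexedLetters ((P.map (rotWord n)).reverse) 1 = _
    exact il_rot n P 1
  have hmq : Lq.length = m := by rw [hLqeq, hm]; simp
  -- letter bounds
  have F0 : ∀ k, k < m → 1 ≤ (Lp.getD k (0, 0)).1 ∧ (Lp.getD k (0, 0)).1 ≤ l ∧
      1 ≤ (Lp.getD k (0, 0)).2 ∧ (Lp.getD k (0, 0)).2 ≤ n := by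
    intro k hk
    have hmm : Lp.getD k (0, 0) ∈ Lp := by
      rw [List.getD_eq_getElem _ _ (by omega)]
      exact List.getElem_mem _
    obtain ⟨hs1, hs2, g, hg, hag⟩ := il_mem_spec (P := P) (s₀ := 1) hmm
    have hb := hbnd g hg _ hag
    refine ⟨hs1, by rw [hl]; omega, hb.1, hb.2⟩
  have Frow : ∀ k, k < m → rowT Lp k + 1 ≤ n ∧ rowT Lp k = (Lp.getD k (0, 0)).2 - 1 := by
    intro k hk
    have h1 := rowT_eq Lp (t := k) (by omega)
    have h2 := F0 k hk
    exact ⟨by omega, h1⟩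
  have Fval : ∀ k, k < m → 1 ≤ valT Lp k ∧ valT Lp k ≤ l := by
    intro k hk
    have h1 := valT_eq Lp (t := k) (by omega)
    have h2 := F0 k hk
    omega
  -- pairwise fact
  have hM : ∀ i j, i < j → j < m →
      valT Lp i < valT Lp j ∨ (valT Lp i = valT Lp j ∧ rowT Lp j ≤ rowT Lp i) := by
    intro i j hij hj
    have hpw := il_pairwise hdec 1
    rw [← hLp] at hpw
    have h := List.pairwise_iff_getElem.1 hpw i j (by omega) (by omega) hij
    rw [valT_eq Lp (t := i) (by omega), valT_eq Lp (t := j) (by omega),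
      (Frow i (by omega)).2, (Frow j (by omega)).2,
      List.getD_eq_getElem _ _ (show i < Lp.length by omega),
      List.getD_eq_getElem _ _ (show j < Lp.length by omega)]
    rcases h with h | ⟨h1, h2⟩
    · left; exact h
    · right; exact ⟨h1, by omega⟩
  -- greedy facts, P side
  have hKP : ∀ i j, i < j → j < m → rowT Lp j ≤ rowT Lp i → colT Lp i < colT Lp j := by
    intro i j hij hj h
    exact colT_K Lp hij (by omega) h
  have hattP : ∀ k, k < m → 0 < colT Lp k →
      ∃ i, i < k ∧ rowT Lp k ≤ rowT Lp i ∧ colT Lp i + 1 = colT Lp k := by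
    intro k hk h
    obtain ⟨i, hi, h1, h2⟩ := colT_attained Lp (t := k) (by omega) h
    exact ⟨i, hi, h1, h2⟩
  have hγlt : ∀ k, k < m → colT Lp k < C := by
    intro k hk
    rw [hC]
    exact colT_lt_cols Lp (by omega)
  have hm0C : m = 0 → C = 0 := by
    intro h0
    have : Lp = [] := List.length_eq_zero_iff.1 (by omega)
    rw [hC, this]
    rfl
  have hCatt : 0 < C → ∃ k, k < m ∧ colT Lp k + 1 = C := by
    intro hCpos
    have hmpos : 0 < m := by
      by_contra h
      have := hm0C (by omega)
      omega
    obtain ⟨k, hk, h⟩ := cols_attained Lp (by omega)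
    exact ⟨k, by omega, by rw [hC]; exact h⟩
  -- Q side correspondence
  have hLqget : ∀ u, u < m → Lq.getD u (0, 0)
      = (1 + l - (Lp.getD (m - 1 - u) (0, 0)).1, n + 1 - (Lp.getD (m - 1 - u) (0, 0)).2) := by
    intro u hu
    have hu' : u < ((Lp.map fun x : ℕ × ℕ => (1 + l - x.1, n + 1 - x.2)).reverse).length := by
      simp; omega
    rw [hLqeq, List.getD_eq_getElem _ _ hu', List.getElem_reverse, List.getElem_map,
      List.getD_eq_getElem _ _ (show m - 1 - u < Lp.length by omega)]
    simp only [List.length_map]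
    rfl
  have hrowq : ∀ u, u < m → rowT Lq u = n - 1 - rowT Lp (m - 1 - u) := by
    intro u hu
    rw [rowT_eq Lq (t := u) (by omega), hLqget u hu]
    have h1 := F0 (m - 1 - u) (by omega)
    have h2 := (Frow (m - 1 - u) (by omega)).2
    simp only []
    omega
  have hvalq : ∀ u, u < m → valT Lq u = 1 + l - valT Lp (m - 1 - u) := by
    intro u hu
    rw [valT_eq Lq (t := u) (by omega), hLqget u hu]
    have h2 := valT_eq Lp (t := m - 1 - u) (by omega)
    simp only []
    omega
  have hKA : ∀ i j, i < j → j < m → rowT Lp j ≤ rowT Lp i →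
      colT Lq (m - 1 - j) < colT Lq (m - 1 - i) := by
    intro i j hij hj h
    apply colT_K Lq (show m - 1 - j < m - 1 - i by omega) (show m - 1 - i < Lq.length by omega)
    rw [hrowq _ (by omega), hrowq _ (by omega),
      show m - 1 - (m - 1 - i) = i by omega, show m - 1 - (m - 1 - j) = j by omega]
    have h1 := Frow i (by omega)
    have h2 := Frow j (by omega)
    omega
  have hattA : ∀ k, k < m → 0 < colT Lq (m - 1 - k) →
      ∃ j, k < j ∧ j < m ∧ rowT Lp j ≤ rowT Lp k ∧
        colT Lq (m - 1 - j) + 1 = colT Lq (m - 1 - k) := by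
    intro k hk h
    obtain ⟨u, hu, hru, hcu⟩ := colT_attained Lq (t := m - 1 - k) (by omega) h
    refine ⟨m - 1 - u, by omega, by omega, ?_, ?_⟩
    · rw [hrowq _ (by omega), hrowq _ (by omega),
        show m - 1 - (m - 1 - k) = k by omega] at hru
      have h1 := Frow k hk
      have h2 := Frow (m - 1 - u) (by omega)
      omega
    · rw [show m - 1 - (m - 1 - u) = u by omega]
      exact hcu
  -- the claims
  obtain ⟨claim1, claim2⟩ := claims_lemma m C (fun k => rowT Lp k) (fun k => colT Lp k)
    (fun k => colT Lq (m - 1 - k)) hKP hKA hattP hattA hγlt hCatt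
  -- config functions
  set rwF : ℕ → ℕ := fun k => n - 1 - rowT Lp k with hrwF
  set vlF : ℕ → ℕ := fun k => l + 1 - valT Lp k with hvlF
  set bF : ℕ → ℕ := fun k => C - 1 - colT Lp k with hbF
  set aF : ℕ → ℕ := fun k => colT Lq (m - 1 - k) with haF
  have hCC : ∀ i j, i < j → j < m → rowT Lp j ≤ rowT Lp i → aF j < aF i ∧ bF j < bF i := by
    intro i j hij hj h
    refine ⟨hKA i j hij hj h, ?_⟩
    have h1 := hKP i j hij hj h
    have h2 := hγlt j hj
    simp only [hbF]
    omega
  have hsame : ∀ i j, i < m → j < m → i ≠ j → rwF i = rwF j →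
      (aF i < aF j ∧ bF i < bF j) ∨ (aF j < aF i ∧ bF j < bF i) := by
    intro i j hi hj hne hrw
    have hρ : rowT Lp i = rowT Lp j := by
      have h1 := Frow i hi
      have h2 := Frow j hj
      simp only [hrwF] at hrw
      omega
    rcases Nat.lt_trichotomy i j with h | h | h
    · exact Or.inr (hCC i j h hj (by omega))
    · exact absurd h hne
    · exact Or.inl (hCC j i h hi (by omega))
  have hstrip : ∀ i j, i < m → j < m → vlF i = vlF j → rwF i < rwF j →
      aF j < aF i ∧ bF j < bF i := by
    intro i j hi hj hvl hrw
    have hv1 := Fval i hi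
    have hv2 := Fval j hj
    have hs : valT Lp i = valT Lp j := by simp only [hvlF] at hvl; omega
    have hr1 := Frow i hi
    have hr2 := Frow j hj
    have hρ : rowT Lp j < rowT Lp i := by simp only [hrwF] at hrw; omega
    have hij : i < j := by
      rcases Nat.lt_trichotomy i j with h | h | h
      · exact h
      · subst h; omega
      · rcases hM j i h hi with h' | ⟨h1, h2⟩
        · omega
        · omega
    exact hCC i j hij hj (by omega)
  have hshadow : ∀ i j, i < m → j < m → vlF i < vlF j → ¬ rwF i < rwF j →
      aF i < aF j ∧ bF i < bF j := by
    intro i j hi hj hvl hnlt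
    have hv1 := Fval i hi
    have hv2 := Fval j hj
    have hs : valT Lp j < valT Lp i := by simp only [hvlF] at hvl; omega
    have hr1 := Frow i hi
    have hr2 := Frow j hj
    have hρ : rowT Lp i ≤ rowT Lp j := by simp only [hrwF] at hnlt; omega
    have hji : j < i := by
      rcases Nat.lt_trichotomy i j with h | h | h
      · rcases hM i j h hj with h' | ⟨h1, h2⟩ <;> omega
      · subst h; omega
      · exact h
    exact hCC j i hji hi hρ
  have hab : ∀ k, k < m → aF k ≤ bF k := by
    intro k hk
    have h1 := claim1 k hk
    have h2 := hγlt k hk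
    simp only [haF, hbF]
    omega
  have hcover : ∀ c, c < C → ∃ k, k < m ∧ aF k = c ∧ bF k = c := by
    intro c hc
    obtain ⟨k, hk, h1, h2⟩ := claim2 c hc
    exact ⟨k, hk, h1, by simp only [hbF]; omega⟩
  have hrowlt : ∀ k, k < m → rwF k < n := by
    intro k hk
    have := Frow k hk
    simp only [hrwF]
    omega
  have hcollt : ∀ k, k < m → bF k < C := by
    intro k hk
    have := hγlt k hk
    simp only [hbF]
    omega
  have hvalF : ∀ k, k < m → 1 ≤ vlF k := by
    intro k hk
    have := Fval k hk
    simp only [hvlF]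
    omega
  have hmain := config_main n C m rwF vlF aF bF hsame hstrip hshadow hab hcover
    hrowlt hcollt hvalF
  -- injectivity facts for entry characterizations
  have hdistP : ∀ i k, i < k → k < Lp.length → rowT Lp i = rowT Lp k → colT Lp i ≠ colT Lp k := by
    intro i k hik hk hrow
    exact Nat.ne_of_lt (colT_K Lp hik hk (by omega))
  have hdistQ : ∀ i k, i < k → k < Lq.length → rowT Lq i = rowT Lq k → colT Lq i ≠ colT Lq k := by
    intro i k hik hk hrow
    exact Nat.ne_of_lt (colT_K Lq hik hk (by omega))
  have hinjA : ∀ i k, i < m → k < m → i ≠ k → rwF i = rwF k → aF i ≠ aF k := by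
    intro i k hi hk hne hrw
    rcases hsame i k hi hk hne hrw with ⟨h1, _⟩ | ⟨h1, _⟩
    · exact Nat.ne_of_lt h1
    · exact (Nat.ne_of_lt h1).symm
  have hinjB : ∀ i k, i < m → k < m → i ≠ k → rwF i = rwF k → bF i ≠ bF k := by
    intro i k hi hk hne hrw
    rcases hsame i k hi hk hne hrw with ⟨_, h1⟩ | ⟨_, h1⟩
    · exact Nat.ne_of_lt h1
    · exact (Nat.ne_of_lt h1).symm
  -- Tab equality A
  have hColsQ : colsOf Lq = C := by
    by_cases hm0 : m = 0
    · have h1 := hm0C hm0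
      have : Lq = [] := List.length_eq_zero_iff.1 (by omega)
      rw [this, colsOf_nil, h1]
    · have hle : colsOf Lq ≤ C := by
        obtain ⟨u, hu, h⟩ := cols_attained Lq (by omega)
        have hum : u < m := by omega
        have h1 := claim1 (m - 1 - u) (by omega)
        rw [show m - 1 - (m - 1 - u) = u by omega] at h1
        omega
      have hge : C ≤ colsOf Lq := by
        have hCpos : 0 < C := by
          have := hγlt 0 (by omega)
          omega
        obtain ⟨k, hk, h1, h2⟩ := claim2 (C - 1) (by omega)
        have h3 := colT_lt_cols Lq (k := m - 1 - k) (by omega)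
        omega
      omega
  have hEqA : Pf (rotParse n P) n = cfg n C m rwF aF vlF := by
    rw [Pf_eq_tabOf, ← hLq]
    refine Tab.ext' ?_ rfl ?_
    · funext r c
      cases hpe : (tabOf Lq n).entry r c with
      | some v =>
        obtain ⟨u, hu, hru, hcu, hvu⟩ := (tabOf_entry_some_iff hdistQ r c v).1 hpe
        have hum : u < m := by omega
        symm
        rw [(cfg_entry_some_iff hinjA r c v).2 ⟨m - 1 - u, by omega, ?_, ?_, ?_⟩]
        · simp only [hrwF]
          rw [← hrowq u hum]
          exact hru
        · simp only [haF]
          rw [show m - 1 - (m - 1 - u) = u by omega]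
          exact hcu
        · simp only [hvlF]
          have h1 := hvalq u hum
          have h2 := Fval (m - 1 - u) (by omega)
          omega
      | none =>
        symm
        rw [cfg_entry_none_iff hinjA]
        intro k hk ⟨h1, h2⟩
        refine (tabOf_entry_none_iff hdistQ r c).1 hpe (m - 1 - k) (by omega) ⟨?_, ?_⟩
        · rw [hrowq _ (by omega), show m - 1 - (m - 1 - k) = k by omega]
          simp only [hrwF] at h1
          exact h1
        · simp only [haF] at h2
          exact h2
    · show colsOf Lq = C
      exact hColsQ
  -- Tab equality B
  have hEqB : rotTab l (Pf P n) = cfg n C m rwF bF vlF := by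
    have hPfrows : (Pf P n).rows = n := rfl
    have hPfcols : (Pf P n).cols = C := by rw [hC]; rfl
    refine Tab.ext' ?_ rfl ?_
    · funext r c
      by_cases hin : r < n ∧ c < C
      · rw [rot_entry_in l (Pf P n) (by rw [hPfrows]; exact hin.1) (by rw [hPfcols]; exact hin.2)]
        rw [hPfrows, hPfcols]
        rw [Pf_eq_tabOf, ← hLp]
        cases hpe : (tabOf Lp n).entry (n - 1 - r) (C - 1 - c) with
        | some v₀ =>
          obtain ⟨k, hk, hrk, hck, hvk⟩ :=
            (tabOf_entry_some_iff hdistP (n - 1 - r) (C - 1 - c) v₀).1 hpe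
          have hkm : k < m := by omega
          symm
          rw [(cfg_entry_some_iff hinjB r c (l + 1 - v₀)).2 ⟨k, hkm, ?_, ?_, ?_⟩]
          · rfl
          · simp only [hrwF]
            omega
          · simp only [hbF]
            have := hγlt k hkm
            omega
          · simp only [hvlF]
            rw [hvk]
        | none =>
          symm
          show (cfg n C m rwF bF vlF).entry r c = none
          rw [cfg_entry_none_iff hinjB]
          intro k hk ⟨h1, h2⟩
          refine (tabOf_entry_none_iff hdistP (n - 1 - r) (C - 1 - c)).1 hpe k (by omega)
            ⟨?_, ?_⟩
          · have h3 := Frow k hk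
            simp only [hrwF] at h1
            omega
          · have h3 := hγlt k hk
            simp only [hbF] at h2
            omega
      · rw [rot_entry_out l (Pf P n) (by rw [hPfrows, hPfcols]; exact hin)]
        symm
        rw [cfg_entry_none_iff hinjB]
        intro k hk ⟨h1, h2⟩
        have h3 := hrowlt k hk
        have h4 := hcollt k hk
        rw [not_and_or] at hin
        rcases hin with h | h <;> omega
    · show (Pf P n).cols = C
      exact hPfcols
  rw [hEqA, hEqB]
  exact hmain

/-- Properties of the rotation map `Rot` (on ptableaux with `n` rows
and entries in `[ℓ]`, and on words in `[n]^{⊗k}`): the left-justified representative of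
`Rot T` is `Rot` of the right-justified representative of `T` and vice versa; `Rot` is
an involution on ptableaux and on words; and `Pf(Rot ω) = Rot(Pf ω)` (with the parsing
of `ω` reversed accordingly). -/
theorem rot_properties (l n : ℕ) :
    (∀ T R : Tab, IsPTab T → T.rows = n →
      (∀ r j v, T.entry r j = some v → 1 ≤ v ∧ v ≤ l) →
      RowEquiv T R → RightJustified R →
      RowEquiv (rotTab l T) (rotTab l R) ∧ LeftJustified (rotTab l R)) ∧
    (∀ T L : Tab, IsPTab T → T.rows = n →
      (∀ r j v, T.entry r j = some v → 1 ≤ v ∧ v ≤ l) →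
      RowEquiv T L → LeftJustified L →
      RowEquiv (rotTab l T) (rotTab l L) ∧ RightJustified (rotTab l L)) ∧
    (∀ T : Tab, IsPTab T → (∀ r j v, T.entry r j = some v → 1 ≤ v ∧ v ≤ l) →
      rotTab l (rotTab l T) = T) ∧
    (∀ ω, IsWord n ω → rotWord n (rotWord n ω) = ω) ∧
    (∀ P, IsParsedWord n P →
      RowEquiv (Pf (rotParse n P) n) (rotTab P.length (Pf P n))) := by
  refine ⟨?_, ?_, ?_, ?_, ?_⟩
  · intro T R hT _ hb hTR hRJ
    exact ⟨rowEquiv_rot hTR hb,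
      leftJustified_rot hTR.2.1 (bnd_of_chain hTR.2.2 hb) hRJ⟩
  · intro T L hT _ hb hTL hLJ
    exact ⟨rowEquiv_rot hTL hb,
      rightJustified_rot hTL.2.1 (bnd_of_chain hTL.2.2 hb) hLJ⟩
  · intro T hT hb
    exact rot_rot hT hb
  · intro ω hω
    exact rotWord_rotWord hω.2
  · intro P hP
    exact pf_rot n P hP

end PerfTab
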